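/- arXiv:2602.17920 — 3 statements merged into one kernel-verified Lean document; each statement's English description precedes it below -/
import Mathlib

section
/- Let Γ ⊆ E and let ψ be a non-degenerate eigenvector of L^Γ whose eigenvalue is the k-th smallest eigenvalue λ_k(Γ) of L^Γ. Let P be the nodal partition of ψ: its parts are the vertex sets of the nodal domains of ψ with respect to σ^Γ, and ∂P equals the nodal set of ψ. Then there exists α ∈ ℝ^{∂P} with all entries positive such that (P, α) is an equipartition with Λ(P, α) = λ_k(Γ). -/
open Matrix Finset

noncomputable section

variable {V : Type*}

/-- The signed Laplacian of the weighted graph `(G,w)` with signature `σ`. -/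
def signedLaplacian [Fintype V] [DecidableEq V] (G : SimpleGraph V) [DecidableRel G.Adj]
    (w σ : V → V → ℝ) : Matrix V V ℝ :=
  Matrix.of fun i j =>
    if i = j then ∑ k, if G.Adj i k then w i k else 0
    else if G.Adj i j then -(σ i j * w i j) else 0

/-- The `n`-th smallest eigenvalue (1-based, counted with multiplicity) of a real
symmetric matrix; junk value `0` if the matrix is not Hermitian or `n` is out of range. -/
def nthEigenvalue [Fintype V] [DecidableEq V] (A : Matrix V V ℝ) (n : ℕ) : ℝ :=
  if h : A.IsHermitian ∧ n - 1 < Fintype.card V then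
    let f : Fin (Fintype.card V) → ℝ := fun i => h.1.eigenvalues ((Fintype.equivFin V).symm i)
    f (Tuple.sort f ⟨n - 1, h.2⟩)
  else 0

/-- `μ` is a simple eigenvalue of `A`: its eigenspace is one-dimensional. -/
def IsSimpleEigenvalue [Fintype V] [DecidableEq V] (A : Matrix V V ℝ) (μ : ℝ) : Prop :=
  Module.finrank ℝ (Module.End.eigenspace (Matrix.toLin' A) μ) = 1

/-- The nodal set of `u` with respect to the signature `σ`, as a set of (unordered) edges. -/
def nodalEdges (G : SimpleGraph V) (σ : V → V → ℝ) (u : V → ℝ) : Set (Sym2 V) :=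
  {e | ∃ i j, e = s(i, j) ∧ G.Adj i j ∧ u i * σ i j * u j < 0}

/-- The number of nodal domains of `u` on `(G,σ)`: the number of connected components
of the spanning subgraph obtained by deleting the nodal set. -/
def nodalCount (G : SimpleGraph V) (σ : V → V → ℝ) (u : V → ℝ) : ℕ :=
  Nat.card (G.deleteEdges (nodalEdges G σ u)).ConnectedComponent

/-- `(G,σ)` is balanced: every cycle has positive sign. -/
def IsBalanced (G : SimpleGraph V) (σ : V → V → ℝ) : Prop :=
  ∀ ⦃v : V⦄ (p : G.Walk v v), p.IsCycle →
    0 < (p.darts.map fun d => σ d.toProd.1 d.toProd.2).prod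

/-- The matrix `B_{ij}(a)`. -/
def Bmat [DecidableEq V] (i j : V) (a : ℝ) : Matrix V V ℝ :=
  Matrix.of fun x y =>
    if x = i ∧ y = i then a
    else if x = j ∧ y = j then a⁻¹
    else if (x = i ∧ y = j) ∨ (x = j ∧ y = i) then -1
    else 0

/-- The signature `σ^{∂P}` determined by the partition `P`. -/
def partSgn {ν : ℕ} (P : V → Fin ν) (i j : V) : ℝ :=
  if P i = P j then 1 else -1

/-- `L^{∂P}(P,α)`: the partition Laplacian perturbed by the rank-one parameter matrices
on the oriented boundary edges `O`. -/
def paramMatrix [Fintype V] [DecidableEq V] (G : SimpleGraph V) [DecidableRel G.Adj]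
    (w : V → V → ℝ) {ν : ℕ} (P : V → Fin ν) (O : Finset (V × V)) (α : V × V → ℝ) :
    Matrix V V ℝ :=
  signedLaplacian G w (partSgn P) + ∑ p ∈ O, w p.1 p.2 • Bmat p.1 p.2 (α p)

/-- The principal submatrix of `M` on the `k`-th part of the partition `P`. -/
def blockMatrix {ν : ℕ} (M : Matrix V V ℝ) (P : V → Fin ν) (k : Fin ν) :
    Matrix {v : V // P v = k} {v : V // P v = k} ℝ :=
  M.submatrix Subtype.val Subtype.val

/-- `λ₁(G_k, α)`: the smallest eigenvalue of the block of `L^{∂P}(P,α)` on part `k`. -/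
def lam1Block [Fintype V] [DecidableEq V] {ν : ℕ} (M : Matrix V V ℝ) (P : V → Fin ν)
    (k : Fin ν) : ℝ :=
  nthEigenvalue (blockMatrix M P k) 1

/-- The partition energy `Λ(P, α) = max_k λ₁(G_k, α)`. -/
def PartitionEnergy [Fintype V] [DecidableEq V] (G : SimpleGraph V) [DecidableRel G.Adj]
    (w : V → V → ℝ) {ν : ℕ} (P : V → Fin ν) (O : Finset (V × V)) (α : V × V → ℝ) : ℝ :=
  ⨆ k : Fin ν, lam1Block (paramMatrix G w P O α) P k

/-- `(P, α)` is an equipartition: all the first block eigenvalues agree. -/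
def IsEquipartition [Fintype V] [DecidableEq V] (G : SimpleGraph V) [DecidableRel G.Adj]
    (w : V → V → ℝ) {ν : ℕ} (P : V → Fin ν) (O : Finset (V × V)) (α : V × V → ℝ) : Prop :=
  ∀ k l : Fin ν, lam1Block (paramMatrix G w P O α) P k = lam1Block (paramMatrix G w P O α) P l


open Classical in
/-- The signature `σ^Γ` associated to a set of edges `Γ`: `-1` on `Γ`, `+1` elsewhere. -/
def sgnOfEdgeSet (Γ : Set (Sym2 V)) (i j : V) : ℝ :=
  if s(i, j) ∈ Γ then -1 else 1

section AuxEigen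

variable {n : Type*} [Fintype n] [DecidableEq n]

lemma symm_isHermitian' {A : Matrix n n ℝ} (hsym : ∀ i j, A i j = A j i) : A.IsHermitian := by
  ext i j
  simp only [conjTranspose_apply, star_trivial]
  exact hsym j i

lemma eigenvalue_ge' {A : Matrix n n ℝ} (hsym : ∀ i j, A i j = A j i)
    (hoff : ∀ i j, i ≠ j → A i j ≤ 0) {φ : n → ℝ} (hφ : ∀ i, 0 < φ i) {lam : ℝ}
    (hev : A.mulVec φ = lam • φ) {x : n → ℝ} (hx : x ≠ 0) {μ : ℝ}
    (hxe : A.mulVec x = μ • x) : lam ≤ μ := by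
  set g : n → ℝ := fun i => x i / φ i with hg
  have hxg : ∀ i, φ i * g i = x i := fun i => by
    rw [hg]; rw [mul_comm, div_mul_cancel₀ _ (hφ i).ne']
  have h1 : ∀ i, ∑ j, A i j * φ j = lam * φ i := fun i => by
    have := congrFun hev i
    simpa [Matrix.mulVec, dotProduct] using this
  have h1' : ∀ j, ∑ i, A i j * φ i = lam * φ j := fun j => by
    rw [← h1 j]; exact Finset.sum_congr rfl fun i _ => by rw [hsym]
  have hXrow : ∀ i, ∑ j, A i j * x j = μ * x i := fun i => by
    have := congrFun hxe i
    simpa [Matrix.mulVec, dotProduct] using this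
  have hX : ∑ i, ∑ j, x i * (A i j * x j) = μ * ∑ i, x i ^ 2 := by
    rw [Finset.mul_sum]
    refine Finset.sum_congr rfl fun i _ => ?_
    rw [← Finset.mul_sum, hXrow i]; ring
  have key : ∑ i, ∑ j, A i j * φ i * φ j * (g i - g j) ^ 2
      = 2 * lam * (∑ i, x i ^ 2) - 2 * (μ * ∑ i, x i ^ 2) := by
    have expand : ∀ i j : n, A i j * φ i * φ j * (g i - g j) ^ 2
        = (φ i * g i ^ 2) * (A i j * φ j) + (φ j * g j ^ 2) * (A i j * φ i)
          - 2 * (x i * (A i j * x j)) := by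
      intro i j
      rw [← hxg i, ← hxg j]; ring
    have e1 : ∑ i, ∑ j, (φ i * g i ^ 2) * (A i j * φ j) = lam * ∑ i, x i ^ 2 := by
      rw [Finset.mul_sum]
      refine Finset.sum_congr rfl fun i _ => ?_
      rw [← Finset.mul_sum, h1 i, ← hxg i]; ring
    have e2 : ∑ i, ∑ j, (φ j * g j ^ 2) * (A i j * φ i) = lam * ∑ i, x i ^ 2 := by
      rw [Finset.sum_comm, Finset.mul_sum]
      refine Finset.sum_congr rfl fun j _ => ?_
      rw [← Finset.mul_sum, h1' j, ← hxg j]; ring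
    calc ∑ i, ∑ j, A i j * φ i * φ j * (g i - g j) ^ 2
        = ∑ i, ∑ j, ((φ i * g i ^ 2) * (A i j * φ j) + (φ j * g j ^ 2) * (A i j * φ i)
            - 2 * (x i * (A i j * x j))) :=
          Finset.sum_congr rfl fun i _ => Finset.sum_congr rfl fun j _ => expand i j
      _ = (∑ i, ∑ j, (φ i * g i ^ 2) * (A i j * φ j))
            + (∑ i, ∑ j, (φ j * g j ^ 2) * (A i j * φ i))
            - 2 * ∑ i, ∑ j, x i * (A i j * x j) := by
          simp [Finset.sum_add_distrib, Finset.sum_sub_distrib, Finset.mul_sum]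
      _ = 2 * lam * (∑ i, x i ^ 2) - 2 * (μ * ∑ i, x i ^ 2) := by
          rw [e1, e2, hX]; ring
  have hnonpos : ∑ i, ∑ j, A i j * φ i * φ j * (g i - g j) ^ 2 ≤ 0 := by
    refine Finset.sum_nonpos fun i _ => Finset.sum_nonpos fun j _ => ?_
    rcases eq_or_ne i j with rfl | hne
    · simp
    · have h0 := hoff i j hne
      have h2 : 0 ≤ φ i * φ j * (g i - g j) ^ 2 :=
        mul_nonneg (mul_pos (hφ i) (hφ j)).le (sq_nonneg _)
      have h3 : A i j * (φ i * φ j * (g i - g j) ^ 2) ≤ 0 :=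
        mul_nonpos_iff.mpr (Or.inr ⟨h0, h2⟩)
      nlinarith [h3]
  have hx2 : 0 < ∑ i, x i ^ 2 := by
    obtain ⟨i, hi⟩ := Function.ne_iff.mp hx
    refine Finset.sum_pos' (fun i _ => sq_nonneg _) ⟨i, Finset.mem_univ i, ?_⟩
    exact lt_of_le_of_ne (sq_nonneg _) (Ne.symm (pow_ne_zero 2 hi))
  nlinarith [key, hnonpos, hx2]

lemma eigenvalue_attained' {A : Matrix n n ℝ} (h : A.IsHermitian) {φ : n → ℝ} (hφ : φ ≠ 0)
    {lam : ℝ} (hev : A.mulVec φ = lam • φ) : ∃ i, h.eigenvalues i = lam := by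
  have hdet : (A - lam • 1).det = 0 := by
    rw [← Matrix.exists_mulVec_eq_zero_iff]
    refine ⟨φ, hφ, ?_⟩
    rw [Matrix.sub_mulVec, Matrix.smul_mulVec, Matrix.one_mulVec, hev, sub_self]
  have hU : (h.eigenvectorUnitary : Matrix n n ℝ) * star (h.eigenvectorUnitary : Matrix n n ℝ)
      = 1 := Matrix.mem_unitaryGroup_iff.mp h.eigenvectorUnitary.2
  have hsp := h.spectral_theorem
  rw [RCLike.ofReal_real_eq_id, Unitary.conjStarAlgAut_apply] at hsp
  have hdec : A - lam • 1 = (h.eigenvectorUnitary : Matrix n n ℝ)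
      * (Matrix.diagonal (fun i => h.eigenvalues i - lam))
      * star (h.eigenvectorUnitary : Matrix n n ℝ) := by
    have hdia : Matrix.diagonal (fun i => h.eigenvalues i - lam)
        = Matrix.diagonal (id ∘ h.eigenvalues) - lam • 1 := by
      ext a b
      by_cases hab : a = b <;>
        simp [Matrix.diagonal_apply, Matrix.one_apply, Matrix.sub_apply, hab]
    rw [hdia, Matrix.mul_sub, Matrix.sub_mul, ← hsp]
    congr 1
    rw [Matrix.mul_smul, Matrix.mul_one, Matrix.smul_mul, hU]
  rw [hdec, Matrix.det_mul, Matrix.det_mul] at hdet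
  have hUdet : (h.eigenvectorUnitary : Matrix n n ℝ).det
      * (star (h.eigenvectorUnitary : Matrix n n ℝ)).det = 1 := by
    rw [← Matrix.det_mul, hU, Matrix.det_one]
  have hD : (Matrix.diagonal (fun i => h.eigenvalues i - lam)).det = 0 := by
    nlinarith [hdet, hUdet]
  rw [Matrix.det_diagonal] at hD
  obtain ⟨i, -, hi⟩ := Finset.prod_eq_zero_iff.mp hD
  exact ⟨i, by linarith [sub_eq_zero.mp hi]⟩

lemma nthEigenvalue_one_eq' {A : Matrix n n ℝ} (h : A.IsHermitian) (hcard : 0 < Fintype.card n)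
    {μ : ℝ} (hub : ∀ i, μ ≤ h.eigenvalues i) (hmem : ∃ i, h.eigenvalues i = μ) :
    nthEigenvalue A 1 = μ := by
  have hc : (1 : ℕ) - 1 < Fintype.card n := by simpa using hcard
  rw [nthEigenvalue, dif_pos ⟨h, hc⟩]
  set f : Fin (Fintype.card n) → ℝ := fun i => h.eigenvalues ((Fintype.equivFin n).symm i) with hf
  have hmono := Tuple.monotone_sort f
  refine le_antisymm ?_ (hub _)
  obtain ⟨i, hi⟩ := hmem
  have h2 : f (Tuple.sort f ((Tuple.sort f).symm (Fintype.equivFin n i))) = μ := by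
    simp [hf, hi]
  calc f (Tuple.sort f ⟨1 - 1, hc⟩)
      ≤ f (Tuple.sort f ((Tuple.sort f).symm (Fintype.equivFin n i))) :=
        hmono (by simp [Fin.le_def])
    _ = μ := h2

lemma nthEigenvalue_one_of_pos_eigenvector' {A : Matrix n n ℝ} (hsym : ∀ i j, A i j = A j i)
    (hoff : ∀ i j, i ≠ j → A i j ≤ 0) {φ : n → ℝ} (hφ : ∀ i, 0 < φ i) {lam : ℝ}
    (hev : A.mulVec φ = lam • φ) (hcard : 0 < Fintype.card n) :
    nthEigenvalue A 1 = lam := by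
  have h := symm_isHermitian' hsym
  have hφ0 : φ ≠ 0 := by
    intro hz
    have := hφ (Classical.choice (Fintype.card_pos_iff.mp hcard))
    rw [hz] at this
    simp at this
  refine nthEigenvalue_one_eq' h hcard (fun i => ?_) (eigenvalue_attained' h hφ0 hev)
  have hvne : (⇑(h.eigenvectorBasis i) : n → ℝ) ≠ 0 :=
    (WithLp.ofLp_eq_zero 2).ne.2 <| h.eigenvectorBasis.orthonormal.ne_zero i
  exact eigenvalue_ge' hsym hoff hφ hev hvne (h.mulVec_eigenvectorBasis i)

end AuxEigen

lemma sig_pos' {x y e : ℝ} (he : e = 1 ∨ e = -1) (h : 0 < x * e * y) :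
    e * y * (if x < 0 then (-1:ℝ) else 1) = |y| := by
  rcases he with rfl | rfl <;> split_ifs with hx <;>
    rcases lt_trichotomy y 0 with hy | rfl | hy <;>
      simp_all [abs_of_neg, abs_of_pos] <;> nlinarith

lemma sig_neg' {x y e : ℝ} (he : e = 1 ∨ e = -1) (h : x * e * y < 0) :
    e * y * (if x < 0 then (-1:ℝ) else 1) = -|y| := by
  rcases he with rfl | rfl <;> split_ifs with hx <;>
    rcases lt_trichotomy y 0 with hy | rfl | hy <;>
      simp_all [abs_of_neg, abs_of_pos] <;> nlinarith



/-- If `ψ` is a non-degenerate eigenvector of `L^Γ` with eigenvalue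
`λ_k(Γ)` and `P` is its nodal partition (the parts are the nodal domains of `ψ` and `∂P`
is the nodal set of `ψ`), then there is a positive parameter vector `α` making `(P, α)` an
equipartition with `Λ(P, α) = λ_k(Γ)`. -/
theorem stmt15 [Fintype V] [DecidableEq V] (G : SimpleGraph V) [DecidableRel G.Adj]
    (hGconn : G.Connected) (w : V → V → ℝ)
    (hwsymm : ∀ i j, w i j = w j i) (hwpos : ∀ i j, G.Adj i j → 0 < w i j)
    (hw0 : ∀ i j, ¬ G.Adj i j → w i j = 0)
    (Γ : Set (Sym2 V)) (hΓ : Γ ⊆ G.edgeSet)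
    (ψ : V → ℝ) (lam : ℝ) (k : ℕ) (hk1 : 1 ≤ k) (hk2 : k ≤ Fintype.card V)
    (heig : (signedLaplacian G w (sgnOfEdgeSet Γ)).mulVec ψ = lam • ψ)
    (hψnz : ∀ v, ψ v ≠ 0)
    (hsimple : IsSimpleEigenvalue (signedLaplacian G w (sgnOfEdgeSet Γ)) lam)
    (hlam : lam = nthEigenvalue (signedLaplacian G w (sgnOfEdgeSet Γ)) k)
    {ν : ℕ} (P : V → Fin ν) (hPsurj : Function.Surjective P)
    (hPconn : ∀ l : Fin ν, (G.induce {v | P v = l}).Connected)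
    (hparts : ∀ i j : V, P i = P j ↔
      (G.deleteEdges (nodalEdges G (sgnOfEdgeSet Γ) ψ)).Reachable i j)
    (hbdry : ∀ i j : V, G.Adj i j →
      (P i ≠ P j ↔ ψ i * sgnOfEdgeSet Γ i j * ψ j < 0))
    (O : Finset (V × V))
    (hO : ∀ p ∈ O, G.Adj p.1 p.2 ∧ P p.1 ≠ P p.2)
    (hOorient : ∀ i j, G.Adj i j → P i ≠ P j → ((i, j) ∈ O ↔ (j, i) ∉ O)) :
    ∃ α : V × V → ℝ, (∀ p ∈ O, 0 < α p) ∧ IsEquipartition G w P O α ∧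
      PartitionEnergy G w P O α = lam := by
  classical
  set α₀ : V × V → ℝ := fun p => |ψ p.2| / |ψ p.1| with hα₀def
  have habs : ∀ v, 0 < |ψ v| := fun v => abs_pos.mpr (hψnz v)
  have hσ : ∀ i j, sgnOfEdgeSet Γ i j = 1 ∨ sgnOfEdgeSet Γ i j = -1 := by
    intro i j
    by_cases h : s(i, j) ∈ Γ
    · right; unfold sgnOfEdgeSet; rw [if_pos h]
    · left; unfold sgnOfEdgeSet; rw [if_neg h]
  have hsψ : ∀ v, ψ v * (if ψ v < 0 then (-1:ℝ) else 1) = |ψ v| := by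
    intro v; split_ifs with h
    · rw [abs_of_neg h]; ring
    · rw [abs_of_nonneg (not_lt.mp h)]; ring
  have hsign : ∀ i j, G.Adj i j →
      sgnOfEdgeSet Γ i j * ψ j * (if ψ i < 0 then (-1:ℝ) else 1)
        = (if P i = P j then |ψ j| else -|ψ j|) := by
    intro i j hadj
    have hprod : ψ i * sgnOfEdgeSet Γ i j * ψ j ≠ 0 := by
      rcases hσ i j with h | h <;> rw [h] <;> simp [hψnz i, hψnz j]
    by_cases hp : P i = P j
    · have h1 : ¬ (ψ i * sgnOfEdgeSet Γ i j * ψ j < 0) := fun hc => (hbdry i j hadj).mpr hc hp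
      have h2 : 0 < ψ i * sgnOfEdgeSet Γ i j * ψ j :=
        lt_of_le_of_ne (not_lt.mp h1) (Ne.symm hprod)
      rw [if_pos hp]
      exact sig_pos' (hσ i j) h2
    · rw [if_neg hp]
      exact sig_neg' (hσ i j) ((hbdry i j hadj).mp hp)
  -- boundary sum identity
  have hbsum : ∀ i : V,
      (∑ p ∈ O, w p.1 p.2 * (if p.1 = i then α₀ p else if p.2 = i then (α₀ p)⁻¹ else 0) * |ψ i|)
        = ∑ j, (if G.Adj i j ∧ P i ≠ P j then w i j * |ψ j| else 0) := by
    intro i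
    rw [← Finset.sum_filter_add_sum_filter_not O (fun p => p.1 = i ∨ p.2 = i)]
    have hz : (∑ p ∈ O.filter (fun p => ¬(p.1 = i ∨ p.2 = i)),
        w p.1 p.2 * (if p.1 = i then α₀ p else if p.2 = i then (α₀ p)⁻¹ else 0) * |ψ i|) = 0 := by
      refine Finset.sum_eq_zero fun p hp => ?_
      rw [Finset.mem_filter] at hp
      push_neg at hp
      rw [if_neg hp.2.1, if_neg hp.2.2]
      ring
    rw [hz, add_zero]
    refine (Finset.sum_bij' (fun p _ => if p.1 = i then p.2 else p.1)
      (fun j _ => if (i, j) ∈ O then (i, j) else (j, i)) ?_ ?_ ?_ ?_ ?_).trans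
      (Finset.sum_filter _ _)
    · -- maps into filter
      intro p hp
      rw [Finset.mem_filter] at hp
      obtain ⟨hpO, hcase⟩ := hp
      obtain ⟨hadj, hne⟩ := hO p hpO
      rw [Finset.mem_filter]
      refine ⟨Finset.mem_univ _, ?_⟩
      split_ifs with h1
      · exact ⟨h1 ▸ hadj, h1 ▸ hne⟩
      · have h2 : p.2 = i := hcase.resolve_left h1
        refine ⟨h2 ▸ hadj.symm, fun hq => hne ?_⟩
        rw [h2, ← hq]
    · -- inverse maps into O-filter
      intro j hj
      rw [Finset.mem_filter] at hj
      obtain ⟨-, hadj, hne⟩ := hj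
      rw [Finset.mem_filter]
      split_ifs with h1
      · exact ⟨h1, Or.inl rfl⟩
      · have h2 : (j, i) ∈ O := by
          by_contra h3
          exact h1 ((hOorient i j hadj hne).mpr h3)
        exact ⟨h2, Or.inr rfl⟩
    · -- left inverse
      intro p hp
      rw [Finset.mem_filter] at hp
      obtain ⟨hpO, hcase⟩ := hp
      obtain ⟨hadj, hne⟩ := hO p hpO
      obtain ⟨p1, p2⟩ := p
      dsimp only at *
      by_cases h1 : p1 = i
      · subst h1
        simp [hpO]
      · have h2 : p2 = i := hcase.resolve_left h1
        subst h2
        have h3 : (p2, p1) ∉ O := fun hmem =>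
          ((hOorient p2 p1 hadj.symm (Ne.symm hne)).mp hmem) hpO
        simp [h1, h3]
    · -- right inverse
      intro j hj
      rw [Finset.mem_filter] at hj
      obtain ⟨-, hadj, hne⟩ := hj
      have hij : j ≠ i := fun h => hne (by rw [h])
      by_cases h1 : (i, j) ∈ O
      · simp [h1]
      · simp [h1, hij]
    · -- values agree
      intro p hp
      rw [Finset.mem_filter] at hp
      obtain ⟨hpO, hcase⟩ := hp
      obtain ⟨hadj, hne⟩ := hO p hpO
      obtain ⟨p1, p2⟩ := p
      dsimp only at *
      by_cases h1 : p1 = i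
      · subst h1
        simp only [eq_self_iff_true, if_true, hα₀def]
        rw [mul_assoc, div_mul_cancel₀ _ (habs p1).ne']
      · have h2 : p2 = i := hcase.resolve_left h1
        subst h2
        simp only [if_neg h1, eq_self_iff_true, if_true, hα₀def, inv_div]
        rw [mul_assoc, div_mul_cancel₀ _ (habs p2).ne', hwsymm p1 p2]
  -- entry formula for Bmat on same-part pairs
  have hBent : ∀ (p : V × V), p ∈ O → ∀ i j : V, P j = P i →
      Bmat p.1 p.2 (α₀ p) i j
        = if i = j then (if p.1 = i then α₀ p else if p.2 = i then (α₀ p)⁻¹ else 0) else 0 := by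
    intro p hp i j hPj
    obtain ⟨hadj, hne⟩ := hO p hp
    unfold Bmat
    simp only [Matrix.of_apply]
    by_cases hij : i = j
    · subst hij
      rw [if_pos rfl]
      by_cases h1 : p.1 = i
      · rw [if_pos ⟨h1.symm, h1.symm⟩, if_pos h1]
      · rw [if_neg (fun hc => h1 hc.1.symm)]
        by_cases h2 : p.2 = i
        · rw [if_pos ⟨h2.symm, h2.symm⟩, if_neg h1, if_pos h2]
        · rw [if_neg (fun hc => h2 hc.1.symm),
            if_neg (fun hc => by
              rcases hc with ⟨ha, hb⟩ | ⟨ha, hb⟩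
              · exact hne (by rw [← ha, ← hb])
              · exact hne (by rw [← ha, ← hb])),
            if_neg h1, if_neg h2]
    · rw [if_neg hij, if_neg (fun hc => hij (hc.1.trans hc.2.symm)),
        if_neg (fun hc => hij (hc.1.trans hc.2.symm)),
        if_neg (fun hc => by
          rcases hc with ⟨h1, h2⟩ | ⟨h1, h2⟩
          · exact hne (by rw [← h1, ← h2]; exact hPj.symm)
          · exact hne (by rw [← h1, ← h2]; exact hPj))]
  -- entry formula for the parameter matrix on same-part pairs
  have hMent : ∀ i j : V, P j = P i → paramMatrix G w P O α₀ i j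
      = if i = j then (∑ m, if G.Adj i m then w i m else 0)
          + (∑ p ∈ O, w p.1 p.2 * (if p.1 = i then α₀ p else if p.2 = i then (α₀ p)⁻¹ else 0))
        else if G.Adj i j then -(w i j) else 0 := by
    intro i j hPj
    unfold paramMatrix
    rw [Matrix.add_apply, Matrix.sum_apply]
    simp only [Matrix.smul_apply, smul_eq_mul]
    have hB : ∀ p ∈ O, w p.1 p.2 * Bmat p.1 p.2 (α₀ p) i j
        = if i = j then
            w p.1 p.2 * (if p.1 = i then α₀ p else if p.2 = i then (α₀ p)⁻¹ else 0) else 0 := by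
      intro p hp
      rw [hBent p hp i j hPj]
      by_cases hij : i = j
      · rw [if_pos hij, if_pos hij]
      · rw [if_neg hij, if_neg hij, mul_zero]
    rw [Finset.sum_congr rfl hB]
    unfold signedLaplacian
    simp only [Matrix.of_apply]
    by_cases hij : i = j
    · subst hij
      simp only [eq_self_iff_true, if_true]
    · rw [if_neg hij, if_neg hij, Finset.sum_eq_zero (fun p _ => if_neg hij), add_zero]
      have hsg : partSgn P i j = 1 := by unfold partSgn; rw [if_pos hPj.symm]
      simp only [hsg, one_mul]
  -- the key eigen-equation on each part
  have key : ∀ i : V,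
      (∑ j ∈ univ.filter (fun j => P j = P i), paramMatrix G w P O α₀ i j * |ψ j|)
        = lam * |ψ i| := by
    intro i
    have hL : (∑ j, signedLaplacian G w (sgnOfEdgeSet Γ) i j * ψ j) = lam * ψ i := by
      have := congrFun heig i
      simpa [Matrix.mulVec, dotProduct] using this
    calc ∑ j ∈ univ.filter (fun j => P j = P i), paramMatrix G w P O α₀ i j * |ψ j|
        = ∑ j, (if P j = P i then paramMatrix G w P O α₀ i j * |ψ j| else 0) :=
          Finset.sum_filter _ _
      _ = ∑ j, (signedLaplacian G w (sgnOfEdgeSet Γ) i j * ψ j * (if ψ i < 0 then (-1:ℝ) else 1)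
            + (if i = j then
                (∑ p ∈ O, w p.1 p.2
                  * (if p.1 = i then α₀ p else if p.2 = i then (α₀ p)⁻¹ else 0)) * |ψ i| else 0)
            - (if G.Adj i j ∧ P i ≠ P j then w i j * |ψ j| else 0)) := by
          refine Finset.sum_congr rfl fun j _ => ?_
          by_cases hp : P j = P i
          · rw [if_pos hp, hMent i j hp]
            by_cases hij : i = j
            · subst hij
              rw [if_pos rfl, if_pos rfl,
                if_neg (fun hc : G.Adj i i ∧ P i ≠ P i => hc.2 rfl)]
              have hLii : signedLaplacian G w (sgnOfEdgeSet Γ) i i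
                  = ∑ m, if G.Adj i m then w i m else 0 := by
                unfold signedLaplacian
                simp only [Matrix.of_apply, eq_self_iff_true, if_true]
              rw [hLii, mul_assoc, hsψ i]
              ring
            · rw [if_neg hij, if_neg hij,
                if_neg (fun hc : G.Adj i j ∧ P i ≠ P j => hc.2 hp.symm), sub_zero, add_zero]
              have hLij : signedLaplacian G w (sgnOfEdgeSet Γ) i j
                  = if G.Adj i j then -(sgnOfEdgeSet Γ i j * w i j) else 0 := by
                unfold signedLaplacian
                simp only [Matrix.of_apply]
                rw [if_neg hij]
              rw [hLij]
              by_cases hadj : G.Adj i j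
              · rw [if_pos hadj, if_pos hadj]
                have hsg := hsign i j hadj
                rw [if_pos hp.symm] at hsg
                rw [← hsg]; ring
              · rw [if_neg hadj, if_neg hadj]; ring
          · rw [if_neg hp]
            have hij : i ≠ j := fun hc => hp (by rw [hc])
            rw [if_neg hij]
            have hLij : signedLaplacian G w (sgnOfEdgeSet Γ) i j
                = if G.Adj i j then -(sgnOfEdgeSet Γ i j * w i j) else 0 := by
              unfold signedLaplacian
              simp only [Matrix.of_apply]
              rw [if_neg hij]
            rw [hLij]
            by_cases hadj : G.Adj i j
            · rw [if_pos hadj,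
                if_pos (show G.Adj i j ∧ P i ≠ P j from ⟨hadj, fun hc => hp hc.symm⟩)]
              have hsg := hsign i j hadj
              rw [if_neg (fun hc : P i = P j => hp hc.symm)] at hsg
              linear_combination (w i j) * hsg
            · rw [if_neg hadj, if_neg (fun hc : G.Adj i j ∧ P i ≠ P j => hadj hc.1)]; ring
      _ = lam * |ψ i| := by
          rw [Finset.sum_sub_distrib, Finset.sum_add_distrib]
          rw [Finset.sum_ite_eq univ i
            (fun _ => (∑ p ∈ O, w p.1 p.2
              * (if p.1 = i then α₀ p else if p.2 = i then (α₀ p)⁻¹ else 0)) * |ψ i|)]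
          rw [if_pos (Finset.mem_univ i)]
          rw [← Finset.sum_mul, hL, Finset.sum_mul, hbsum i]
          rw [mul_assoc, hsψ i]
          ring
  -- symmetry of the parameter matrix
  have hBsymm : ∀ (p q : V) (c : ℝ) (x y : V), Bmat p q c x y = Bmat p q c y x := by
    intro p q c x y
    unfold Bmat
    simp only [Matrix.of_apply]
    split_ifs <;> first | rfl | tauto
  have hMsymm : ∀ x y : V, paramMatrix G w P O α₀ x y = paramMatrix G w P O α₀ y x := by
    intro x y
    unfold paramMatrix
    rw [Matrix.add_apply, Matrix.add_apply, Matrix.sum_apply, Matrix.sum_apply]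
    have hSL : signedLaplacian G w (partSgn P) x y = signedLaplacian G w (partSgn P) y x := by
      unfold signedLaplacian
      simp only [Matrix.of_apply]
      by_cases hxy : x = y
      · subst hxy; rfl
      · rw [if_neg hxy, if_neg (Ne.symm hxy)]
        by_cases hadj : G.Adj x y
        · rw [if_pos hadj, if_pos hadj.symm, hwsymm x y]
          have hps : partSgn P x y = partSgn P y x := by
            unfold partSgn
            by_cases h : P x = P y
            · rw [if_pos h, if_pos h.symm]
            · rw [if_neg h, if_neg (fun hc => h hc.symm)]
          rw [hps]
        · rw [if_neg hadj, if_neg (fun h => hadj h.symm)]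
    rw [hSL]
    congr 1
    refine Finset.sum_congr rfl fun p _ => ?_
    simp only [Matrix.smul_apply, smul_eq_mul]
    rw [hBsymm]
  -- off-diagonal nonpositivity on each part
  have hMoff : ∀ x y : V, x ≠ y → P y = P x → paramMatrix G w P O α₀ x y ≤ 0 := by
    intro x y hxy hPxy
    rw [hMent x y hPxy, if_neg hxy]
    by_cases hadj : G.Adj x y
    · rw [if_pos hadj]; linarith [hwpos x y hadj]
    · rw [if_neg hadj]
  -- each block has first eigenvalue lam
  have hblock : ∀ k' : Fin ν, lam1Block (paramMatrix G w P O α₀) P k' = lam := by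
    intro k'
    obtain ⟨v0, hv0⟩ := hPsurj k'
    have hcard : 0 < Fintype.card {v : V // P v = k'} := Fintype.card_pos_iff.mpr ⟨⟨v0, hv0⟩⟩
    have hBsym : ∀ x y : {v : V // P v = k'},
        blockMatrix (paramMatrix G w P O α₀) P k' x y
          = blockMatrix (paramMatrix G w P O α₀) P k' y x := fun x y => hMsymm x.1 y.1
    have hBoff : ∀ x y : {v : V // P v = k'}, x ≠ y →
        blockMatrix (paramMatrix G w P O α₀) P k' x y ≤ 0 := by
      intro x y hxy
      exact hMoff x.1 y.1 (fun h => hxy (Subtype.ext h)) (y.2.trans x.2.symm)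
    have hBev : (blockMatrix (paramMatrix G w P O α₀) P k').mulVec (fun v => |ψ v.1|)
        = lam • (fun v => |ψ v.1|) := by
      funext x
      have hx := key x.1
      have hfilter : univ.filter (fun j => P j = P x.1) = univ.filter (fun j => P j = k') := by
        rw [x.2]
      rw [hfilter] at hx
      have hsub : ∑ j ∈ univ.filter (fun j : V => P j = k'),
          paramMatrix G w P O α₀ x.1 j * |ψ j|
          = ∑ j : {v : V // P v = k'}, paramMatrix G w P O α₀ x.1 j.1 * |ψ j.1| :=
        Finset.sum_subtype _ (by intro v; simp) _
      rw [hsub] at hx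
      show ∑ j : {v : V // P v = k'},
          blockMatrix (paramMatrix G w P O α₀) P k' x j * |ψ j.1| = lam * |ψ x.1|
      exact hx
    unfold lam1Block
    exact nthEigenvalue_one_of_pos_eigenvector' hBsym hBoff (fun v => habs v.1) hBev hcard
  refine ⟨α₀, fun p _ => div_pos (habs p.2) (habs p.1), ?_, ?_⟩
  · intro k1 k2
    rw [hblock k1, hblock k2]
  · have hVne : Nonempty V := Fintype.card_pos_iff.mp (by omega)
    have hνne : Nonempty (Fin ν) := ⟨P (Classical.choice hVne)⟩
    unfold PartitionEnergy
    simp only [hblock]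
    exact ciSup_const

end
end

section
/- Let Γ ⊆ E, let P be a ν-partition of G with boundary ∂P, and suppose there exists Γ̃ ⊆ ∂P such that σ^Γ is switching equivalent to σ^{Γ̃}. Then for every α ∈ ℝ^{∂P} with all entries positive, λ_ν(Γ) ≤ Λ(P, α), where λ_ν(Γ) is the ν-th smallest eigenvalue of L^Γ counted with multiplicity. -/
open Matrix Finset

noncomputable section

variable {V : Type*}

/-- Two signatures on `G` are switching equivalent. -/
def SwitchingEquiv (G : SimpleGraph V) (σ σ' : V → V → ℝ) : Prop :=
  ∃ τ : V → ℝ, (∀ v, τ v = 1 ∨ τ v = -1) ∧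
    ∀ i j, G.Adj i j → σ' i j = τ i * σ i j * τ j

section Aux2
set_option linter.unusedSectionVars false
set_option maxHeartbeats 1600000
variable [Fintype V] [DecidableEq V]

lemma isHermitian_of_symm (M : Matrix V V ℝ) (h : ∀ x y, M x y = M y x) : M.IsHermitian := by
  unfold Matrix.IsHermitian
  ext x y
  simp [Matrix.conjTranspose_apply, h x y]

/-- generic sparse symmetric 2×2-support matrix -/
def genMat (i j : V) (a c : ℝ) : Matrix V V ℝ :=
  Matrix.of fun x y =>
    if x = i ∧ y = i then a
    else if x = j ∧ y = j then a⁻¹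
    else if (x = i ∧ y = j) ∨ (x = j ∧ y = i) then c
    else 0

lemma Bmat_eq_genMat (i j : V) (a : ℝ) : Bmat i j a = genMat i j a (-1) := rfl

lemma genMat_apply_offdiag (i j x y : V) (a c : ℝ) (hxy : x ≠ y) :
    genMat i j a c x y = (if (i, j) = (x, y) then c else 0) + (if (i, j) = (y, x) then c else 0) := by
  have hdiag1 : ¬(x = i ∧ y = i) := fun h => hxy (h.1.trans h.2.symm)
  have hdiag2 : ¬(x = j ∧ y = j) := fun h => hxy (h.1.trans h.2.symm)
  simp only [genMat, Matrix.of_apply, if_neg hdiag1, if_neg hdiag2]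
  by_cases hA : x = i ∧ y = j
  · obtain ⟨rfl, rfl⟩ := hA
    simp [Prod.ext_iff, hxy]
  · by_cases hB : x = j ∧ y = i
    · obtain ⟨rfl, rfl⟩ := hB
      simp [Prod.ext_iff, hxy, Ne.symm hxy]
    · have hC : ¬((x = i ∧ y = j) ∨ (x = j ∧ y = i)) := fun h => h.elim hA hB
      rw [if_neg hC]
      have hD : ¬((i, j) = (x, y)) := fun h => by
        rw [Prod.ext_iff] at h; exact hA ⟨h.1.symm, h.2.symm⟩
      have hE : ¬((i, j) = (y, x)) := fun h => by
        rw [Prod.ext_iff] at h; exact hB ⟨h.2.symm, h.1.symm⟩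
      rw [if_neg hD, if_neg hE, add_zero]

lemma genMat_diag (i j : V) (hij : i ≠ j) (a c c' : ℝ) (x : V) :
    genMat i j a c x x = genMat i j a c' x x := by
  simp only [genMat, Matrix.of_apply]
  by_cases h1 : x = i <;> by_cases h2 : x = j <;> simp_all

lemma sum_genMat_offdiag (O : Finset (V × V)) (w' a c : V × V → ℝ) (x y : V) (hxy : x ≠ y) :
    (∑ p ∈ O, w' p • genMat p.1 p.2 (a p) (c p)) x y
      = (if (x, y) ∈ O then w' (x, y) * c (x, y) else 0)
        + (if (y, x) ∈ O then w' (y, x) * c (y, x) else 0) := by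
  rw [Matrix.sum_apply]
  have h : ∀ p ∈ O, (w' p • genMat p.1 p.2 (a p) (c p)) x y
      = (if p = (x, y) then w' p * c p else 0) + (if p = (y, x) then w' p * c p else 0) := by
    intro p _
    rw [Matrix.smul_apply, genMat_apply_offdiag _ _ _ _ _ _ hxy, Prod.mk.eta, smul_eq_mul,
      mul_add]
    congr 1 <;> split_ifs <;> ring
  rw [Finset.sum_congr rfl h, Finset.sum_add_distrib,
    Finset.sum_ite_eq' O (x, y) (fun p => w' p * c p),
    Finset.sum_ite_eq' O (y, x) (fun p => w' p * c p)]

lemma dot_std (i j : V) (cc : ℝ) (v : V → ℝ) :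
    v ⬝ᵥ (Matrix.single i j cc *ᵥ v) = cc * (v i * v j) := by
  rw [Matrix.single_mulVec]
  simp only [dotProduct, Function.update_apply, Pi.zero_apply]
  have h : ∀ x ∈ Finset.univ, v x * (if x = i then cc * v j else 0)
      = if x = i then v x * (cc * v j) else 0 := by
    intro x _; split_ifs <;> ring
  rw [Finset.sum_congr rfl h, Finset.sum_ite_eq' Finset.univ i (fun x => v x * (cc * v j))]
  simp; ring

lemma genMat_decomp (i j : V) (hij : i ≠ j) (a c : ℝ) :
    genMat i j a c = a • Matrix.single i i 1 + a⁻¹ • Matrix.single j j 1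
      + c • Matrix.single i j 1 + c • Matrix.single j i 1 := by
  ext x y
  have hji : ¬ j = i := fun h => hij h.symm
  simp only [genMat, Matrix.of_apply, Matrix.add_apply, Matrix.smul_apply, smul_eq_mul,
    Matrix.single, Matrix.of_apply]
  by_cases h1 : x = i <;> by_cases h2 : y = i <;> by_cases h3 : x = j <;> by_cases h4 : y = j <;>
    simp_all [eq_comm]

lemma quad_genMat (i j : V) (hij : i ≠ j) (a c : ℝ) (v : V → ℝ) :
    v ⬝ᵥ (genMat i j a c *ᵥ v) = a * (v i * v i) + a⁻¹ * (v j * v j) + 2 * c * (v i * v j) := by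
  rw [genMat_decomp i j hij a c]
  rw [Matrix.add_mulVec, Matrix.add_mulVec, Matrix.add_mulVec]
  rw [Matrix.smul_mulVec, Matrix.smul_mulVec, Matrix.smul_mulVec,
    Matrix.smul_mulVec]
  rw [dotProduct_add, dotProduct_add, dotProduct_add]
  rw [dotProduct_smul, dotProduct_smul, dotProduct_smul, dotProduct_smul]
  rw [dot_std, dot_std, dot_std, dot_std]
  simp only [smul_eq_mul]
  ring

lemma quad_genMat_nonneg (i j : V) (hij : i ≠ j) (a c : ℝ) (ha : 0 < a)
    (hc : c = 1 ∨ c = -1) (v : V → ℝ) : 0 ≤ v ⬝ᵥ (genMat i j a c *ᵥ v) := by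
  rw [quad_genMat i j hij a c v]
  have h1 : a * a⁻¹ = 1 := mul_inv_cancel₀ ha.ne'
  have h2 : 0 < a⁻¹ := inv_pos.mpr ha
  rcases hc with rfl | rfl
  · nlinarith [sq_nonneg (a * v i + v j), sq_nonneg (v i + v j), mul_pos ha h2]
  · nlinarith [sq_nonneg (a * v i - v j), sq_nonneg (v i - v j), mul_pos ha h2]

lemma dot_sum_mulVec {ι : Type*} (s : Finset ι) (Ms : ι → Matrix V V ℝ) (v : V → ℝ) :
    v ⬝ᵥ ((∑ p ∈ s, Ms p) *ᵥ v) = ∑ p ∈ s, v ⬝ᵥ (Ms p *ᵥ v) := by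
  have h : (∑ p ∈ s, Ms p) *ᵥ v = ∑ p ∈ s, Ms p *ᵥ v := by
    funext x
    simp only [mulVec, dotProduct, Matrix.sum_apply, Finset.sum_apply, Finset.sum_mul]
    exact Finset.sum_comm
  rw [h]
  simp only [dotProduct, Finset.sum_apply, Finset.mul_sum]
  exact Finset.sum_comm

end Aux2

section Aux
set_option linter.unusedSectionVars false
set_option maxHeartbeats 1600000
variable [Fintype V] [DecidableEq V]

lemma dot_mulVec_expand (M : Matrix V V ℝ) (v : V → ℝ) :
    v ⬝ᵥ (M *ᵥ v) = ∑ x, ∑ y, v x * M x y * v y := by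
  simp [dotProduct, mulVec, Finset.mul_sum, mul_assoc]

lemma mulVec_sum_smul (M : Matrix V V ℝ) {κ : Type*} [Fintype κ] (b : κ → ℝ) (F : κ → V → ℝ) :
    M *ᵥ (fun x => ∑ l, b l * F l x) = fun x => ∑ l, b l * (M *ᵥ F l) x := by
  funext x
  simp [mulVec, dotProduct, Finset.mul_sum]
  rw [Finset.sum_comm]
  congr 1; funext y; congr 1; funext l; ring

lemma bilin_expand (M : Matrix V V ℝ) {κ : Type*} [Fintype κ] (a b : κ → ℝ) (F : κ → V → ℝ) :
    (fun x => ∑ k, a k * F k x) ⬝ᵥ (M *ᵥ (fun x => ∑ l, b l * F l x))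
      = ∑ k, ∑ l, a k * b l * (F k ⬝ᵥ (M *ᵥ F l)) := by
  rw [mulVec_sum_smul]
  simp only [dotProduct]
  calc ∑ x, (∑ k, a k * F k x) * (∑ l, b l * (M *ᵥ F l) x)
      = ∑ x, ∑ k, ∑ l, (a k * F k x) * (b l * (M *ᵥ F l) x) := by
        congr 1; funext x; rw [Finset.sum_mul_sum]
    _ = ∑ k, ∑ x, ∑ l, (a k * F k x) * (b l * (M *ᵥ F l) x) := Finset.sum_comm
    _ = ∑ k, ∑ l, ∑ x, (a k * F k x) * (b l * (M *ᵥ F l) x) := by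
        congr 1; funext k; exact Finset.sum_comm
    _ = ∑ k, ∑ l, a k * b l * ∑ x, F k x * (M *ᵥ F l) x := by
        congr 1; funext k; congr 1; funext l
        rw [Finset.mul_sum]; congr 1; funext x; ring

lemma ortho_complete (E : V → V → ℝ)
    (hE : ∀ i j, (∑ x, E i x * E j x) = if i = j then 1 else 0)
    (u : V → ℝ) (x : V) : ∑ i, (∑ y, E i y * u y) * E i x = u x := by
  have hQ : (Matrix.of fun i x => E i x) * (Matrix.of fun i x => E i x)ᵀ = 1 := by
    ext i j
    simp [Matrix.mul_apply, Matrix.one_apply, hE i j, eq_comm]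
  have hQ2 : (Matrix.of fun i x => E i x)ᵀ * (Matrix.of fun i x => E i x) = 1 :=
    mul_eq_one_comm.mp hQ
  have hcol : ∀ x y : V, (∑ i, E i x * E i y) = if x = y then 1 else 0 := by
    intro x y
    have := congrFun (congrFun hQ2 x) y
    simpa [Matrix.mul_apply, Matrix.one_apply] using this
  calc ∑ i, (∑ y, E i y * u y) * E i x = ∑ i, ∑ y, E i y * u y * E i x := by
        simp [Finset.sum_mul]
    _ = ∑ y, ∑ i, E i y * u y * E i x := Finset.sum_comm
    _ = ∑ y, u y * ∑ i, E i y * E i x := by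
        congr 1; funext y; rw [Finset.mul_sum]; congr 1; funext i; ring
    _ = u x := by simp [hcol, eq_comm]

lemma nthEigenvalue_le_of_subspace {A : Matrix V V ℝ} (hA : A.IsHermitian)
    (m : ℕ) (hm : m < Fintype.card V) (Λ : ℝ) (W : Submodule ℝ (V → ℝ))
    (hW : m + 1 ≤ Module.finrank ℝ W)
    (hform : ∀ u ∈ W, u ⬝ᵥ (A *ᵥ u) ≤ Λ * (u ⬝ᵥ u)) :
    nthEigenvalue A (m + 1) ≤ Λ := by
  classical
  set n := Fintype.card V with hn
  set E : V → V → ℝ := fun i x => hA.eigenvectorBasis i x with hEdef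
  have hE : ∀ i j, (∑ x, E i x * E j x) = if i = j then 1 else 0 := by
    intro i j
    have := orthonormal_iff_ite.mp hA.eigenvectorBasis.orthonormal i j
    simpa [hEdef, PiLp.inner_apply, RCLike.inner_apply, conj_trivial, mul_comm] using this
  have hAE : ∀ i, A *ᵥ E i = fun x => hA.eigenvalues i * E i x := by
    intro i
    have := hA.mulVec_eigenvectorBasis i
    funext x
    simpa [hEdef] using congrFun this x
  set c : (V → ℝ) → V → ℝ := fun u i => ∑ y, E i y * u y with hcdef
  have hrepr : ∀ u : V → ℝ, u = fun x => ∑ i, c u i * E i x := by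
    intro u; funext x; exact (ortho_complete E hE u x).symm
  have hEdot : ∀ k l, E k ⬝ᵥ (A *ᵥ E l) = hA.eigenvalues l * (if k = l then 1 else 0) := by
    intro k l
    rw [hAE l]
    calc (E k ⬝ᵥ fun x => hA.eigenvalues l * E l x)
        = hA.eigenvalues l * ∑ x, E k x * E l x := by
          simp [dotProduct, Finset.mul_sum]; congr 1; funext x; ring
      _ = _ := by rw [hE]
  have hEdot1 : ∀ k l, E k ⬝ᵥ ((1 : Matrix V V ℝ) *ᵥ E l) = if k = l then 1 else 0 := by
    intro k l
    rw [one_mulVec]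
    simpa [dotProduct] using hE k l
  have quadA : ∀ u : V → ℝ, u ⬝ᵥ (A *ᵥ u) = ∑ i, hA.eigenvalues i * (c u i)^2 := by
    intro u
    conv_lhs => rw [hrepr u]
    rw [bilin_expand]
    simp only [hEdot, mul_ite, mul_one, mul_zero]
    rw [Finset.sum_comm]
    congr 1; funext l
    rw [Finset.sum_ite_eq' univ l (fun k => c u k * c u l * hA.eigenvalues l)]
    simp [pow_two]; ring
  have quadI : ∀ u : V → ℝ, u ⬝ᵥ u = ∑ i, (c u i)^2 := by
    intro u
    have h1 : u ⬝ᵥ u = u ⬝ᵥ ((1 : Matrix V V ℝ) *ᵥ u) := by rw [one_mulVec]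
    rw [h1]
    conv_lhs => rw [hrepr u]
    rw [bilin_expand]
    simp only [hEdot1, mul_ite, mul_one, mul_zero]
    rw [Finset.sum_comm]
    congr 1; funext l
    rw [Finset.sum_ite_eq' univ l (fun k => c u k * c u l)]
    simp [pow_two]
  set f : Fin n → ℝ := fun i => hA.eigenvalues ((Fintype.equivFin V).symm i) with hf
  have hmono : Monotone (f ∘ Tuple.sort f) := Tuple.monotone_sort f
  set β : Fin n → V := fun j => (Fintype.equivFin V).symm (Tuple.sort f j) with hβ
  have hβbij : Function.Bijective β :=
    ((Tuple.sort f).trans (Fintype.equivFin V).symm).bijective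
  set R : Matrix (Fin m) V ℝ := Matrix.of fun j x => E (β (Fin.castLE (le_of_lt hm) j)) x with hR
  set Φ : W →ₗ[ℝ] (Fin m → ℝ) := R.mulVecLin.comp W.subtype with hΦ
  have hrk := Φ.finrank_range_add_finrank_ker
  have hrle : Module.finrank ℝ (LinearMap.range Φ) ≤ m := by
    have := Submodule.finrank_le (LinearMap.range Φ)
    simpa using this
  have hkerpos : 0 < Module.finrank ℝ (LinearMap.ker Φ) := by
    have hWrk : Module.finrank ℝ W = Module.finrank ℝ (LinearMap.range Φ) +
        Module.finrank ℝ (LinearMap.ker Φ) := hrk.symm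
    omega
  have hkerne : LinearMap.ker Φ ≠ ⊥ := by
    intro h
    rw [h] at hkerpos
    simp at hkerpos
  obtain ⟨x, hxker, hxne⟩ := (Submodule.ne_bot_iff _).mp hkerne
  set u : V → ℝ := (x : V → ℝ) with hu
  have huW : u ∈ W := x.2
  have hu0 : u ≠ 0 := fun h => hxne (Subtype.coe_injective h)
  have hczero : ∀ j : Fin n, (j : ℕ) < m → c u (β j) = 0 := by
    intro j hj
    have h1 : Φ x = 0 := hxker
    have h3 : (R *ᵥ u) ⟨j.1, hj⟩ = 0 := congrFun h1 ⟨j.1, hj⟩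
    have h4 : Fin.castLE (le_of_lt hm) (⟨j.1, hj⟩ : Fin m) = j := by
      apply Fin.ext; rfl
    calc c u (β j) = ∑ y, E (β j) y * u y := rfl
      _ = (R *ᵥ u) ⟨j.1, hj⟩ := by
          simp [hR, mulVec, dotProduct, h4]
      _ = 0 := h3
  have hupos : 0 < u ⬝ᵥ u := by
    rcases Function.ne_iff.mp hu0 with ⟨x0, hx0⟩
    have : (0:ℝ) < u x0 * u x0 := mul_self_pos.mpr hx0
    have hterms : ∀ y ∈ Finset.univ, (0:ℝ) ≤ u y * u y := fun y _ => mul_self_nonneg _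
    exact Finset.sum_pos' hterms ⟨x0, Finset.mem_univ x0, this⟩
  have hsumA : u ⬝ᵥ (A *ᵥ u) = ∑ j : Fin n, (f ∘ Tuple.sort f) j * (c u (β j))^2 := by
    rw [quadA u]
    rw [← Fintype.sum_bijective β hβbij _ _ (fun j => rfl)]
    exact Finset.sum_congr rfl (fun j _ => rfl)
  have hsumI : u ⬝ᵥ u = ∑ j : Fin n, (c u (β j))^2 := by
    rw [quadI u]
    rw [← Fintype.sum_bijective β hβbij _ _ (fun j => rfl)]
  set gm : ℝ := (f ∘ Tuple.sort f) ⟨m, hm⟩ with hgm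
  have key : gm * (u ⬝ᵥ u) ≤ u ⬝ᵥ (A *ᵥ u) := by
    rw [hsumA, hsumI, Finset.mul_sum]
    apply Finset.sum_le_sum
    intro j _
    by_cases hj : (j : ℕ) < m
    · rw [hczero j hj]
      simp
    · push_neg at hj
      have hle : (⟨m, hm⟩ : Fin n) ≤ j := hj
      exact mul_le_mul_of_nonneg_right (hmono hle) (sq_nonneg _)
  have hgmle : gm ≤ Λ := by
    have h1 : gm * (u ⬝ᵥ u) ≤ Λ * (u ⬝ᵥ u) := le_trans key (hform u huW)
    exact (mul_le_mul_iff_left₀ hupos).mp h1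
  have hcond : A.IsHermitian ∧ m + 1 - 1 < Fintype.card V := ⟨hA, by simpa using hm⟩
  rw [nthEigenvalue, dif_pos hcond]
  exact hgmle

end Aux

section Aux3
set_option linter.unusedSectionVars false
set_option maxHeartbeats 1600000
variable [Fintype V] [DecidableEq V]

lemma sgnOfEdgeSet_symm (Γ : Set (Sym2 V)) (i j : V) :
    sgnOfEdgeSet Γ i j = sgnOfEdgeSet Γ j i := by
  have h : s(i, j) = s(j, i) := Sym2.eq_swap
  unfold sgnOfEdgeSet
  rw [h]

lemma sgnOfEdgeSet_pm (Γ : Set (Sym2 V)) (i j : V) :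
    sgnOfEdgeSet Γ i j = 1 ∨ sgnOfEdgeSet Γ i j = -1 := by
  unfold sgnOfEdgeSet
  split_ifs <;> simp

lemma signedLaplacian_symm (G : SimpleGraph V) [DecidableRel G.Adj] (w σ : V → V → ℝ)
    (hw : ∀ i j, w i j = w j i) (hσ : ∀ i j, σ i j = σ j i) :
    ∀ x y, signedLaplacian G w σ x y = signedLaplacian G w σ y x := by
  intro x y
  by_cases h : x = y
  · subst h; rfl
  · simp only [signedLaplacian, Matrix.of_apply, if_neg h, if_neg (Ne.symm h)]
    by_cases hadj : G.Adj x y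
    · rw [if_pos hadj, if_pos hadj.symm, hw x y, hσ x y]
    · rw [if_neg hadj, if_neg (fun h' => hadj h'.symm)]

lemma signedLaplacian_diag_eq (G : SimpleGraph V) [DecidableRel G.Adj] (w σ σ' : V → V → ℝ)
    (x : V) : signedLaplacian G w σ x x = signedLaplacian G w σ' x x := by
  simp [signedLaplacian]

lemma switch_entry (G : SimpleGraph V) [DecidableRel G.Adj] (w σ σ' : V → V → ℝ) (τ : V → ℝ)
    (hτ : ∀ v, τ v = 1 ∨ τ v = -1)
    (hσ' : ∀ i j, G.Adj i j → σ' i j = τ i * σ i j * τ j) :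
    ∀ x y, signedLaplacian G w σ' x y = τ x * signedLaplacian G w σ x y * τ y := by
  intro x y
  have hτsq : ∀ v, τ v * τ v = 1 := fun v => by rcases hτ v with h | h <;> rw [h] <;> norm_num
  by_cases h : x = y
  · subst h
    simp only [signedLaplacian, Matrix.of_apply, if_pos rfl]
    calc (∑ k, if G.Adj x k then w x k else 0)
        = (∑ k, if G.Adj x k then w x k else 0) * (τ x * τ x) := by rw [hτsq, mul_one]
      _ = τ x * (∑ k, if G.Adj x k then w x k else 0) * τ x := by ring
  · simp only [signedLaplacian, Matrix.of_apply, if_neg h]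
    by_cases hadj : G.Adj x y
    · rw [if_pos hadj, if_pos hadj, hσ' x y hadj]
      ring
    · rw [if_neg hadj, if_neg hadj]
      ring

lemma partSgn_symm {ν : ℕ} (P : V → Fin ν) (i j : V) : partSgn P i j = partSgn P j i := by
  simp [partSgn, eq_comm]

lemma Bmat_symm (i j : V) (a : ℝ) : ∀ x y, Bmat i j a x y = Bmat i j a y x := by
  intro x y
  simp only [Bmat, Matrix.of_apply]
  by_cases h1 : x = i <;> by_cases h2 : y = i <;> by_cases h3 : x = j <;> by_cases h4 : y = j <;>
    simp_all [eq_comm]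

lemma paramMatrix_symm (G : SimpleGraph V) [DecidableRel G.Adj] (w : V → V → ℝ)
    (hw : ∀ i j, w i j = w j i) {ν : ℕ} (P : V → Fin ν) (O : Finset (V × V)) (α : V × V → ℝ) :
    ∀ x y, paramMatrix G w P O α x y = paramMatrix G w P O α y x := by
  intro x y
  simp only [paramMatrix, Matrix.add_apply, Matrix.sum_apply, Matrix.smul_apply]
  rw [signedLaplacian_symm G w (partSgn P) hw (partSgn_symm P) x y]
  congr 1
  exact Finset.sum_congr rfl (fun p _ => by rw [Bmat_symm p.1 p.2 (α p) x y])

lemma sum_part {ν : ℕ} (P : V → Fin ν) (k : Fin ν) (g : V → ℝ)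
    (hg : ∀ y, P y ≠ k → g y = 0) :
    ∑ y, g y = ∑ y : {v : V // P v = k}, g y.val := by
  rw [← Fintype.sum_fiberwise P g]
  rw [Finset.sum_eq_single k]
  · intro j _ hj
    apply Finset.sum_eq_zero
    intro y _
    exact hg y.val (by rw [y.2]; exact hj)
  · intro h
    exact absurd (Finset.mem_univ k) h

lemma exists_unit_eigvec {W : Type*} [Fintype W] [DecidableEq W] [Nonempty W]
    {B : Matrix W W ℝ} (hB : B.IsHermitian) :
    ∃ v : W → ℝ, (∑ x, v x * v x) = 1 ∧ ∀ x, (B *ᵥ v) x = nthEigenvalue B 1 * v x := by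
  have hcard : 1 - 1 < Fintype.card W := by simp [Fintype.card_pos]
  have hcond : B.IsHermitian ∧ 1 - 1 < Fintype.card W := ⟨hB, hcard⟩
  set f : Fin (Fintype.card W) → ℝ := fun i => hB.eigenvalues ((Fintype.equivFin W).symm i)
    with hf
  set i0 : W := (Fintype.equivFin W).symm (Tuple.sort f ⟨1 - 1, hcard⟩) with hi0
  refine ⟨fun x => hB.eigenvectorBasis i0 x, ?_, ?_⟩
  · have := orthonormal_iff_ite.mp hB.eigenvectorBasis.orthonormal i0 i0
    simp only [PiLp.inner_apply, RCLike.inner_apply, conj_trivial, if_true] at this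
    simpa [mul_comm] using this
  · intro x
    have hval : nthEigenvalue B 1 = hB.eigenvalues i0 := by
      rw [nthEigenvalue, dif_pos hcond]
    have := congrFun (hB.mulVec_eigenvectorBasis i0) x
    rw [hval]
    simpa using this

lemma exists_block_eigvec {ν : ℕ} (P : V → Fin ν) (M : Matrix V V ℝ)
    (hM : ∀ x y, M x y = M y x) (k : Fin ν) (hk : ∃ x, P x = k) :
    ∃ u : V → ℝ, (∀ x, P x ≠ k → u x = 0) ∧ (∑ x, u x * u x) = 1 ∧
      ∀ x, P x = k → (M *ᵥ u) x = lam1Block M P k * u x := by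
  haveI : Nonempty {v : V // P v = k} := ⟨⟨hk.choose, hk.choose_spec⟩⟩
  have hB : (blockMatrix M P k).IsHermitian :=
    isHermitian_of_symm _ (fun x y => hM x.val y.val)
  obtain ⟨v, hv1, hv2⟩ := exists_unit_eigvec hB
  set u : V → ℝ := fun x => if h : P x = k then v ⟨x, h⟩ else 0 with hu
  have hsupp : ∀ x, P x ≠ k → u x = 0 := fun x h => dif_neg h
  have huval : ∀ y : {v : V // P v = k}, u y.val = v y := by
    intro y
    rw [hu]
    simp only [dif_pos y.2]
  refine ⟨u, hsupp, ?_, ?_⟩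
  · rw [sum_part P k (fun x => u x * u x) (fun y hy => by show u y * u y = 0; rw [hsupp y hy]; ring)]
    rw [Finset.sum_congr rfl (fun y _ => by rw [huval y])]
    exact hv1
  · intro x hx
    have h1 : (M *ᵥ u) x = ∑ y, M x y * u y := rfl
    rw [h1, sum_part P k (fun y => M x y * u y) (fun y hy => by show M x y * u y = 0; rw [hsupp y hy]; ring)]
    have h2 : ∀ y : {v : V // P v = k}, M x y.val * u y.val
        = blockMatrix M P k ⟨x, hx⟩ y * v y := by
      intro y
      rw [huval y]
      rfl
    rw [Finset.sum_congr rfl (fun y _ => h2 y)]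
    have h3 : (∑ y : {v : V // P v = k}, blockMatrix M P k ⟨x, hx⟩ y * v y)
        = (blockMatrix M P k *ᵥ v) ⟨x, hx⟩ := rfl
    rw [h3, hv2 ⟨x, hx⟩]
    rw [huval ⟨x, hx⟩]
    rfl

end Aux3

section Aux4
set_option linter.unusedSectionVars false
set_option maxHeartbeats 1600000
variable [Fintype V] [DecidableEq V]

lemma sgn_inner_part {ν : ℕ} (P : V → Fin ν) (G : SimpleGraph V) (Γt : Set (Sym2 V))
    (hΓt : ∀ e ∈ Γt, ∃ i j, e = s(i, j) ∧ G.Adj i j ∧ P i ≠ P j)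
    (x y : V) (hP : P x = P y) : sgnOfEdgeSet Γt x y = 1 := by
  unfold sgnOfEdgeSet
  rw [if_neg]
  intro hmem
  obtain ⟨i, j, heq, _, hPij⟩ := hΓt _ hmem
  rw [Sym2.eq_iff] at heq
  rcases heq with ⟨rfl, rfl⟩ | ⟨rfl, rfl⟩
  · exact hPij hP
  · exact hPij hP.symm

lemma sumBmat_eq (O : Finset (V × V)) (w : V → V → ℝ) (α : V × V → ℝ) :
    (∑ p ∈ O, w p.1 p.2 • Bmat p.1 p.2 (α p))
      = ∑ p ∈ O, (fun q => w q.1 q.2) p • genMat p.1 p.2 (α p) ((fun _ => (-1 : ℝ)) p) :=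
  Finset.sum_congr rfl (fun p _ => by rw [Bmat_eq_genMat])

lemma paramMatrix_offblock (G : SimpleGraph V) [DecidableRel G.Adj] (w : V → V → ℝ)
    (hwsymm : ∀ i j, w i j = w j i) {ν : ℕ} (P : V → Fin ν) (O : Finset (V × V))
    (hO : ∀ p ∈ O, G.Adj p.1 p.2 ∧ P p.1 ≠ P p.2)
    (hOorient : ∀ i j, G.Adj i j → P i ≠ P j → ((i, j) ∈ O ↔ (j, i) ∉ O))
    (α : V × V → ℝ) :
    ∀ x y, P x ≠ P y → paramMatrix G w P O α x y = 0 := by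
  intro x y hP
  have hxy : x ≠ y := fun h => hP (by rw [h])
  simp only [paramMatrix, Matrix.add_apply]
  rw [sumBmat_eq, sum_genMat_offdiag O _ _ _ x y hxy]
  have hL : signedLaplacian G w (partSgn P) x y = if G.Adj x y then w x y else 0 := by
    simp only [signedLaplacian, Matrix.of_apply, if_neg hxy, partSgn, if_neg hP]
    split_ifs with h
    · ring
    · rfl
  rw [hL]
  by_cases hadj : G.Adj x y
  · rw [if_pos hadj]
    by_cases hxyO : (x, y) ∈ O
    · have h2 : (y, x) ∉ O := (hOorient x y hadj hP).mp hxyO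
      rw [if_pos hxyO, if_neg h2]
      ring
    · have h2 : (y, x) ∈ O := (hOorient y x hadj.symm (Ne.symm hP)).mpr hxyO
      rw [if_neg hxyO, if_pos h2]
      have : w y x = w x y := hwsymm y x
      rw [this]
      ring
  · rw [if_neg hadj]
    have h1 : (x, y) ∉ O := fun hmem => hadj (hO _ hmem).1
    have h2 : (y, x) ∉ O := fun hmem => hadj ((hO _ hmem).1).symm
    rw [if_neg h1, if_neg h2]
    ring

lemma param_decomp (G : SimpleGraph V) [DecidableRel G.Adj] (w : V → V → ℝ)
    (hwsymm : ∀ i j, w i j = w j i) {ν : ℕ} (P : V → Fin ν) (O : Finset (V × V))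
    (hO : ∀ p ∈ O, G.Adj p.1 p.2 ∧ P p.1 ≠ P p.2)
    (hOorient : ∀ i j, G.Adj i j → P i ≠ P j → ((i, j) ∈ O ↔ (j, i) ∉ O))
    (Γt : Set (Sym2 V))
    (hΓt : ∀ e ∈ Γt, ∃ i j, e = s(i, j) ∧ G.Adj i j ∧ P i ≠ P j)
    (α : V × V → ℝ) :
    paramMatrix G w P O α = signedLaplacian G w (sgnOfEdgeSet Γt)
      + ∑ p ∈ O, (fun q => w q.1 q.2) p •
          genMat p.1 p.2 (α p) ((fun q => sgnOfEdgeSet Γt q.1 q.2) p) := by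
  apply Matrix.ext
  intro x y
  simp only [paramMatrix, Matrix.add_apply]
  by_cases hxy : x = y
  · subst hxy
    rw [signedLaplacian_diag_eq G w (partSgn P) (sgnOfEdgeSet Γt) x]
    congr 1
    rw [Matrix.sum_apply, Matrix.sum_apply]
    apply Finset.sum_congr rfl
    intro p hp
    have hne : p.1 ≠ p.2 := (hO p hp).1.ne
    rw [Bmat_eq_genMat, Matrix.smul_apply, Matrix.smul_apply, genMat_diag _ _ hne]
  · rw [sumBmat_eq, sum_genMat_offdiag O _ _ _ x y hxy,
      sum_genMat_offdiag O _ _ _ x y hxy]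
    simp only []
    have hsymmΓt : sgnOfEdgeSet Γt y x = sgnOfEdgeSet Γt x y := sgnOfEdgeSet_symm Γt y x
    by_cases hadj : G.Adj x y
    · by_cases hP : P x = P y
      · have hO1 : (x, y) ∉ O := fun hmem => (hO _ hmem).2 hP
        have hO2 : (y, x) ∉ O := fun hmem => (hO _ hmem).2 hP.symm
        rw [if_neg hO1, if_neg hO2, if_neg hO1, if_neg hO2]
        simp only [signedLaplacian, Matrix.of_apply, if_neg hxy, if_pos hadj]
        rw [partSgn, if_pos hP, sgn_inner_part P G Γt hΓt x y hP]
      · have hLp : signedLaplacian G w (partSgn P) x y = w x y := by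
          simp only [signedLaplacian, Matrix.of_apply, if_neg hxy, if_pos hadj,
            partSgn, if_neg hP]
          ring
        have hLt : signedLaplacian G w (sgnOfEdgeSet Γt) x y
            = -(sgnOfEdgeSet Γt x y * w x y) := by
          simp only [signedLaplacian, Matrix.of_apply, if_neg hxy, if_pos hadj]
        rw [hLp, hLt]
        by_cases hxyO : (x, y) ∈ O
        · have h2 : (y, x) ∉ O := (hOorient x y hadj hP).mp hxyO
          rw [if_pos hxyO, if_neg h2, if_pos hxyO, if_neg h2]
          ring
        · have h2 : (y, x) ∈ O := (hOorient y x hadj.symm (Ne.symm hP)).mpr hxyO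
          rw [if_neg hxyO, if_pos h2, if_neg hxyO, if_pos h2, hwsymm y x, hsymmΓt]
          ring
    · have h1 : (x, y) ∉ O := fun hmem => hadj (hO _ hmem).1
      have h2 : (y, x) ∉ O := fun hmem => hadj ((hO _ hmem).1).symm
      rw [if_neg h1, if_neg h2, if_neg h1, if_neg h2]
      simp only [signedLaplacian, Matrix.of_apply, if_neg hxy, if_neg hadj]

end Aux4

/-- lower bound for the partition energy. If `Γ̃ ⊆ ∂P` is such that
`σ^Γ` is switching equivalent to `σ^{Γ̃}`, then for every positive parameter vector `α`,
the `ν`-th smallest eigenvalue of `L^Γ` is at most `Λ(P, α)`. -/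
theorem stmt16 [Fintype V] [DecidableEq V] (G : SimpleGraph V) [DecidableRel G.Adj]
    (hGconn : G.Connected) (w : V → V → ℝ)
    (hwsymm : ∀ i j, w i j = w j i) (hwpos : ∀ i j, G.Adj i j → 0 < w i j)
    (hw0 : ∀ i j, ¬ G.Adj i j → w i j = 0)
    (Γ : Set (Sym2 V)) (hΓ : Γ ⊆ G.edgeSet)
    {ν : ℕ} (P : V → Fin ν) (hPsurj : Function.Surjective P)
    (hPconn : ∀ k : Fin ν, (G.induce {v | P v = k}).Connected)
    (O : Finset (V × V))
    (hO : ∀ p ∈ O, G.Adj p.1 p.2 ∧ P p.1 ≠ P p.2)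
    (hOorient : ∀ i j, G.Adj i j → P i ≠ P j → ((i, j) ∈ O ↔ (j, i) ∉ O))
    (Γt : Set (Sym2 V))
    (hΓt : ∀ e ∈ Γt, ∃ i j, e = s(i, j) ∧ G.Adj i j ∧ P i ≠ P j)
    (hswitch : SwitchingEquiv G (sgnOfEdgeSet Γ) (sgnOfEdgeSet Γt)) :
    ∀ α : V × V → ℝ, (∀ p ∈ O, 0 < α p) →
      nthEigenvalue (signedLaplacian G w (sgnOfEdgeSet Γ)) ν ≤ PartitionEnergy G w P O α := by
  intro α hα
  classical
  have hVne : Nonempty V := hGconn.nonempty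
  have hν : 0 < ν := (P (Classical.arbitrary V)).pos
  have hνcard : ν ≤ Fintype.card V := by
    simpa using Fintype.card_le_of_surjective P hPsurj
  obtain ⟨τ, hτpm, hτ⟩ := hswitch
  have hτsq : ∀ x, τ x * τ x = 1 := fun x => by
    rcases hτpm x with h | h <;> rw [h] <;> norm_num
  set Mα := paramMatrix G w P O α with hMαdef
  have hMαsymm : ∀ x y, Mα x y = Mα y x := paramMatrix_symm G w hwsymm P O α
  have hoffblock : ∀ x y, P x ≠ P y → Mα x y = 0 :=
    paramMatrix_offblock G w hwsymm P O hO hOorient α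
  set μ : Fin ν → ℝ := fun k => lam1Block Mα P k with hμdef
  set Λ : ℝ := PartitionEnergy G w P O α with hΛdef
  have hΛiSup : Λ = ⨆ k, μ k := rfl
  have hμΛ : ∀ k, μ k ≤ Λ := by
    intro k
    rw [hΛiSup]
    exact le_ciSup (Finite.bddAbove_range μ) k
  have hex : ∀ k : Fin ν, ∃ u : V → ℝ, (∀ x, P x ≠ k → u x = 0) ∧ (∑ x, u x * u x) = 1 ∧
      ∀ x, P x = k → (Mα *ᵥ u) x = μ k * u x :=
    fun k => exists_block_eigvec P Mα hMαsymm k (hPsurj k)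
  choose uu hsupp hnorm heig using hex
  set A := signedLaplacian G w (sgnOfEdgeSet Γ) with hAdef
  set At := signedLaplacian G w (sgnOfEdgeSet Γt) with hAtdef
  have hAherm : A.IsHermitian :=
    isHermitian_of_symm _ (signedLaplacian_symm G w _ hwsymm (sgnOfEdgeSet_symm Γ))
  have hswent : ∀ x y, At x y = τ x * A x y * τ y :=
    switch_entry G w (sgnOfEdgeSet Γ) (sgnOfEdgeSet Γt) τ hτpm hτ
  set F : Fin ν → V → ℝ := fun k x => τ x * uu k x with hFdef
  have hFsupp0 : ∀ (k : Fin ν) (x : V), P x ≠ k → F k x = 0 := by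
    intro k x h
    show τ x * uu k x = 0
    rw [hsupp k x h, mul_zero]
  set Mx : Matrix V (Fin ν) ℝ := Matrix.of (fun x k => F k x) with hMxdef
  set Φ : (Fin ν → ℝ) →ₗ[ℝ] (V → ℝ) := Mx.mulVecLin with hΦdef
  have hΦapp : ∀ c : Fin ν → ℝ, Φ c = fun x => ∑ k, c k * F k x := by
    intro c
    funext x
    show ∑ k, Mx x k * c k = ∑ k, c k * F k x
    exact Finset.sum_congr rfl (fun k _ => mul_comm _ _)
  have hΦinj : Function.Injective Φ := by
    apply (injective_iff_map_eq_zero Φ).mpr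
    intro c hc
    funext k
    have hex0 : ∃ x, P x = k ∧ uu k x ≠ 0 := by
      by_contra h
      push_neg at h
      have hall : ∀ x, uu k x = 0 := by
        intro x
        by_cases hx : P x = k
        · exact h x hx
        · exact hsupp k x hx
      have h1 := hnorm k
      rw [Finset.sum_eq_zero (fun x _ => by rw [hall x, mul_zero])] at h1
      norm_num at h1
    obtain ⟨x, hxk, hxne⟩ := hex0
    have h0' : ∑ l, c l * F l x = 0 :=
      (congrFun (hΦapp c) x).symm.trans (congrFun hc x)
    have hsum : ∑ l, c l * F l x = c k * F k x := by
      rw [Finset.sum_eq_single k]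
      · intro l _ hlk
        rw [hFsupp0 l x (by rw [hxk]; exact Ne.symm hlk), mul_zero]
      · intro h
        exact absurd (Finset.mem_univ k) h
    have hF0 : F k x ≠ 0 := by
      show τ x * uu k x ≠ 0
      rcases hτpm x with ht | ht <;> rw [ht] <;> intro h <;>
        [skip; rw [neg_one_mul, neg_eq_zero] at h] <;>
        [rw [one_mul] at h; skip] <;> exact hxne h
    have := hsum ▸ h0'
    exact (mul_eq_zero.mp this).resolve_right hF0
  have hWrank : Module.finrank ℝ (LinearMap.range Φ) = ν := by
    rw [LinearMap.finrank_range_of_inj hΦinj, Module.finrank_fin_fun]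
  have hform : ∀ u ∈ LinearMap.range Φ, u ⬝ᵥ (A *ᵥ u) ≤ Λ * (u ⬝ᵥ u) := by
    intro u huW
    obtain ⟨c, rfl⟩ := huW
    rw [hΦapp c]
    set v : V → ℝ := fun x => ∑ k, c k * uu k x with hvdef
    have hswap : (fun x => ∑ k, c k * F k x) = fun x => τ x * v x := by
      funext x
      show ∑ k, c k * (τ x * uu k x) = τ x * ∑ k, c k * uu k x
      rw [Finset.mul_sum]
      exact Finset.sum_congr rfl (fun k _ => by ring)
    rw [hswap]
    -- switch the quadratic form
    have quadA : (fun x => τ x * v x) ⬝ᵥ (A *ᵥ (fun x => τ x * v x)) = v ⬝ᵥ (At *ᵥ v) := by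
      rw [dot_mulVec_expand, dot_mulVec_expand]
      apply Finset.sum_congr rfl
      intro x _
      apply Finset.sum_congr rfl
      intro y _
      show τ x * v x * A x y * (τ y * v y) = v x * At x y * v y
      rw [hswent x y]
      ring
    have dotI : (fun x => τ x * v x) ⬝ᵥ (fun x => τ x * v x) = v ⬝ᵥ v := by
      apply Finset.sum_congr rfl
      intro x _
      show τ x * v x * (τ x * v x) = v x * v x
      calc τ x * v x * (τ x * v x) = (τ x * τ x) * (v x * v x) := by ring
        _ = v x * v x := by rw [hτsq x, one_mul]
    rw [quadA, dotI]
    -- compare with the partition matrix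
    have hdec := param_decomp G w hwsymm P O hO hOorient Γt hΓt α
    have hcomp : v ⬝ᵥ (At *ᵥ v) ≤ v ⬝ᵥ (Mα *ᵥ v) := by
      rw [hMαdef, hdec, Matrix.add_mulVec, dotProduct_add]
      have hpsd : 0 ≤ v ⬝ᵥ ((∑ p ∈ O, (fun q => w q.1 q.2) p •
          genMat p.1 p.2 (α p) ((fun q => sgnOfEdgeSet Γt q.1 q.2) p)) *ᵥ v) := by
        rw [dot_sum_mulVec]
        apply Finset.sum_nonneg
        intro p hp
        rw [Matrix.smul_mulVec, dotProduct_smul, smul_eq_mul]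
        apply mul_nonneg (hwpos p.1 p.2 (hO p hp).1).le
        exact quad_genMat_nonneg p.1 p.2 (hO p hp).1.ne (α p) _ (hα p hp)
          (sgnOfEdgeSet_pm Γt p.1 p.2) v
      linarith
    -- diagonalize over the blocks
    have hval : ∀ k l, uu k ⬝ᵥ (Mα *ᵥ uu l) = if k = l then μ k else 0 := by
      intro k l
      by_cases hkl : k = l
      · subst hkl
        rw [if_pos rfl]
        have h1 : ∀ x, uu k x * (Mα *ᵥ uu k) x = μ k * (uu k x * uu k x) := by
          intro x
          by_cases hx : P x = k
          · rw [heig k x hx]; ring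
          · rw [hsupp k x hx]; ring
        calc uu k ⬝ᵥ (Mα *ᵥ uu k) = ∑ x, uu k x * (Mα *ᵥ uu k) x := rfl
          _ = ∑ x, μ k * (uu k x * uu k x) := Finset.sum_congr rfl (fun x _ => h1 x)
          _ = μ k * ∑ x, uu k x * uu k x := by rw [Finset.mul_sum]
          _ = μ k := by rw [hnorm k, mul_one]
      · rw [if_neg hkl]
        show ∑ x, uu k x * (Mα *ᵥ uu l) x = 0
        apply Finset.sum_eq_zero
        intro x _
        by_cases hx : P x = k
        · have h2 : (Mα *ᵥ uu l) x = 0 := by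
            show ∑ y, Mα x y * uu l y = 0
            apply Finset.sum_eq_zero
            intro y _
            by_cases hy : P y = l
            · rw [hoffblock x y (by rw [hx, hy]; exact hkl), zero_mul]
            · rw [hsupp l y hy, mul_zero]
          rw [h2, mul_zero]
        · rw [hsupp k x hx, zero_mul]
    have hval1 : ∀ k l, uu k ⬝ᵥ ((1 : Matrix V V ℝ) *ᵥ uu l) = if k = l then (1:ℝ) else 0 := by
      intro k l
      rw [one_mulVec]
      by_cases hkl : k = l
      · subst hkl
        rw [if_pos rfl]
        exact hnorm k
      · rw [if_neg hkl]
        show ∑ x, uu k x * uu l x = 0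
        apply Finset.sum_eq_zero
        intro x _
        by_cases hx : P x = k
        · rw [hsupp l x (by rw [hx]; exact hkl), mul_zero]
        · rw [hsupp k x hx, zero_mul]
    have hcollapse : ∀ g : Fin ν → ℝ,
        (∑ k, ∑ l, c k * c l * (if k = l then g k else 0)) = ∑ k, c k * c k * g k := by
      intro g
      apply Finset.sum_congr rfl
      intro k _
      rw [Finset.sum_eq_single k]
      · rw [if_pos rfl]
      · intro l _ hlk
        rw [if_neg (fun h => hlk h.symm), mul_zero]
      · intro h
        exact absurd (Finset.mem_univ k) h
    have quadM : v ⬝ᵥ (Mα *ᵥ v) = ∑ k, c k * c k * μ k := by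
      rw [hvdef, bilin_expand Mα c c uu]
      rw [Finset.sum_congr rfl (fun k _ => Finset.sum_congr rfl (fun l _ => by rw [hval k l]))]
      exact hcollapse μ
    have quadIv : v ⬝ᵥ v = ∑ k, c k * c k := by
      have h1 : v ⬝ᵥ v = v ⬝ᵥ ((1 : Matrix V V ℝ) *ᵥ v) := by rw [one_mulVec]
      rw [h1, hvdef, bilin_expand (1 : Matrix V V ℝ) c c uu]
      rw [Finset.sum_congr rfl (fun k _ => Finset.sum_congr rfl (fun l _ => by rw [hval1 k l]))]
      rw [hcollapse (fun _ => 1)]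
      exact Finset.sum_congr rfl (fun k _ => by rw [mul_one])
    have hfinal : (∑ k, c k * c k * μ k) ≤ Λ * ∑ k, c k * c k := by
      rw [Finset.mul_sum]
      apply Finset.sum_le_sum
      intro k _
      calc c k * c k * μ k ≤ c k * c k * Λ := by
            exact mul_le_mul_of_nonneg_left (hμΛ k) (mul_self_nonneg _)
        _ = Λ * (c k * c k) := by ring
    calc v ⬝ᵥ (At *ᵥ v) ≤ v ⬝ᵥ (Mα *ᵥ v) := hcomp
      _ = ∑ k, c k * c k * μ k := quadM
      _ ≤ Λ * ∑ k, c k * c k := hfinal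
      _ = Λ * (v ⬝ᵥ v) := by rw [quadIv]
  have hm : ν - 1 < Fintype.card V := by omega
  have hmain := nthEigenvalue_le_of_subspace hAherm (ν - 1) hm Λ (LinearMap.range Φ)
    (by rw [hWrank]; omega) hform
  have hν1 : ν - 1 + 1 = ν := by omega
  rw [hν1] at hmain
  exact hmain


end
end

section
/- Let P be a partition of G with boundary ∂P, let Γ̃ ⊆ ∂P, and let α ∈ ℝ^{∂P} have all entries positive. Let A be the symmetric V×V matrix with A_ij = A_ji = 2w_ij for (i,j) ∈ ∂P ∖ Γ̃ and all other entries 0, and let B(α) = Σ_{(i,j)∈∂P} w_ij B_ij(α_ij). Then L^{Γ̃} = L^{∂P}(P,α) − A − B(α), and for every u : V → ℝ, ⟨u, (A + B(α)) u⟩ = Σ_{(i,j)∈∂P∖Γ̃} w_ij α_ij (u_i + u_j/α_ij)² + Σ_{(i,j)∈Γ̃} w_ij α_ij (u_i − u_j/α_ij)² ≥ 0; in particular A + B(α) is positive semidefinite. -/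
open Matrix Finset

noncomputable section

variable {V : Type*}

/-- The symmetric matrix `A` with entries `2 w_ij` on the (unordered) boundary edges not in
`Γ̃` (here `T ⊆ O` records the oriented edges of `Γ̃`) and `0` elsewhere. -/
def Amat [DecidableEq V] (w : V → V → ℝ) (O T : Finset (V × V)) : Matrix V V ℝ :=
  Matrix.of fun x y =>
    if (x, y) ∈ O \ T ∨ (y, x) ∈ O \ T then 2 * w x y else 0

/-- The signature equal to `-1` on the (unordered) edges recorded by the oriented edge set
`T` and `+1` elsewhere. -/
def sgnOfOriented [DecidableEq V] (T : Finset (V × V)) (i j : V) : ℝ :=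
  if (i, j) ∈ T ∨ (j, i) ∈ T then -1 else 1


/-! ### Auxiliary lemmas -/

section Aux

variable [Fintype V] [DecidableEq V]

omit [Fintype V] in
private lemma quad_aux_Bmat_transpose (i j : V) (a : ℝ) : (Bmat i j a)ᵀ = Bmat i j a := by
  ext x y
  by_cases hx : x = i <;> by_cases hy : y = i <;> by_cases hx' : x = j <;> by_cases hy' : y = j <;>
    simp_all [Bmat, eq_comm]

omit [Fintype V] in
private lemma quad_aux_Bmat_symm (i j x y : V) (a : ℝ) :
    Bmat i j a y x = Bmat i j a x y := by
  have h := quad_aux_Bmat_transpose i j a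
  simpa [Matrix.transpose_apply] using congrFun (congrFun h x) y

private lemma quad_aux_std (i j : V) (c : ℝ) (u : V → ℝ) :
    u ⬝ᵥ (single i j c).mulVec u = c * (u i * u j) := by
  simp [dotProduct, mulVec, single, ite_and, Finset.mul_sum]
  ring

private lemma quad_aux_sum_mulVec {ι : Type*} (s : Finset ι) (A : ι → Matrix V V ℝ)
    (u : V → ℝ) : (∑ p ∈ s, A p).mulVec u = ∑ p ∈ s, (A p).mulVec u := by
  ext x
  simp [mulVec, dotProduct, Matrix.sum_apply, Finset.sum_mul]
  exact Finset.sum_comm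

private lemma quad_aux_dot_sum {ι : Type*} (s : Finset ι) (v : ι → V → ℝ) (u : V → ℝ) :
    u ⬝ᵥ (∑ p ∈ s, v p) = ∑ p ∈ s, u ⬝ᵥ v p := by
  simp [dotProduct, Finset.sum_apply, Finset.mul_sum]
  exact Finset.sum_comm

omit [Fintype V] in
private lemma quad_aux_Bmat_decomp (i j : V) (hij : i ≠ j) (a : ℝ) :
    Bmat i j a = a • single i i (1:ℝ) + a⁻¹ • single j j 1
      - single i j 1 - single j i 1 := by
  ext x y
  by_cases hx : x = i <;> by_cases hy : y = i <;> by_cases hx' : x = j <;> by_cases hy' : y = j <;>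
    simp_all [Bmat, single, eq_comm]

private lemma quad_aux_quadB (i j : V) (hij : i ≠ j) (a : ℝ) (ha : a ≠ 0) (u : V → ℝ) :
    u ⬝ᵥ (Bmat i j a).mulVec u = a * (u i - u j / a) ^ 2 := by
  rw [quad_aux_Bmat_decomp i j hij a]
  simp only [sub_mulVec, add_mulVec, smul_mulVec, dotProduct_sub, dotProduct_add,
    dotProduct_smul, quad_aux_std, smul_eq_mul]
  field_simp
  ring

omit [Fintype V] in
private lemma quad_aux_Amat_decomp (w : V → V → ℝ) (hwsymm : ∀ i j, w i j = w j i)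
    (O T : Finset (V × V))
    (hkey : ∀ x y : V, ¬((x, y) ∈ O \ T ∧ (y, x) ∈ O \ T)) :
    Amat w O T = ∑ p ∈ O \ T,
      (2 * w p.1 p.2) • (single p.1 p.2 (1:ℝ) + single p.2 p.1 1) := by
  ext x y
  rw [Matrix.sum_apply]
  have hcongr : ∀ p ∈ O \ T,
      (((2 * w p.1 p.2) • (single p.1 p.2 (1:ℝ) + single p.2 p.1 1) :
          Matrix V V ℝ)) x y
        = (if p = (x, y) then 2 * w x y else 0) + (if p = (y, x) then 2 * w x y else 0) := by
    rintro ⟨a, b⟩ _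
    have hw := hwsymm x y
    clear hwsymm hkey
    simp only [Matrix.smul_apply, Matrix.add_apply, single, of_apply, Prod.mk.injEq,
      smul_eq_mul]
    by_cases h1 : a = x ∧ b = y
    · obtain ⟨rfl, rfl⟩ := h1
      by_cases h2 : a = b
      · subst h2; simp; ring
      · have h2' : ¬(a = b ∧ b = a) := fun h => h2 h.1
        have hba : ¬(b = a ∧ a = b) := fun h => h2 h.2
        simp [hba, h2']
    · by_cases h2 : a = y ∧ b = x
      · obtain ⟨rfl, rfl⟩ := h2
        simp [h1, hw]
      · have hba : ¬(b = x ∧ a = y) := fun h => h2 ⟨h.2, h.1⟩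
        simp [h1, h2, hba]
  rw [Finset.sum_congr rfl hcongr, Finset.sum_add_distrib, Finset.sum_ite_eq' (O \ T) (x, y),
    Finset.sum_ite_eq' (O \ T) (y, x)]
  by_cases h1 : (x, y) ∈ O \ T
  · by_cases h2 : (y, x) ∈ O \ T
    · exact absurd ⟨h1, h2⟩ (hkey x y)
    · rw [if_pos h1, if_neg h2]
      simp only [Amat, of_apply, if_pos (Or.inl h1 : (x, y) ∈ O \ T ∨ (y, x) ∈ O \ T)]
      ring
  · by_cases h2 : (y, x) ∈ O \ T
    · rw [if_neg h1, if_pos h2]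
      simp only [Amat, of_apply, if_pos (Or.inr h2 : (x, y) ∈ O \ T ∨ (y, x) ∈ O \ T)]
      ring
    · rw [if_neg h1, if_neg h2]
      simp only [Amat, of_apply, if_neg (not_or.mpr ⟨h1, h2⟩)]
      ring

end Aux

/-- With `Γ̃ ⊆ ∂P` (recorded by `T ⊆ O`) and positive `α`, one has
`L^{Γ̃} = L^{∂P}(P,α) − A − B(α)`, and the quadratic form of `A + B(α)` is the stated sum
of squares; in particular `A + B(α)` is positive semidefinite. -/
theorem stmt19 [Fintype V] [DecidableEq V] (G : SimpleGraph V) [DecidableRel G.Adj]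
    (hGconn : G.Connected) (w : V → V → ℝ)
    (hwsymm : ∀ i j, w i j = w j i) (hwpos : ∀ i j, G.Adj i j → 0 < w i j)
    (hw0 : ∀ i j, ¬ G.Adj i j → w i j = 0)
    {ν : ℕ} (P : V → Fin ν) (hPsurj : Function.Surjective P)
    (hPconn : ∀ k : Fin ν, (G.induce {v | P v = k}).Connected)
    (O : Finset (V × V))
    (hO : ∀ p ∈ O, G.Adj p.1 p.2 ∧ P p.1 ≠ P p.2)
    (hOorient : ∀ i j, G.Adj i j → P i ≠ P j → ((i, j) ∈ O ↔ (j, i) ∉ O))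
    (T : Finset (V × V)) (hT : T ⊆ O)
    (α : V × V → ℝ) (hαpos : ∀ p ∈ O, 0 < α p) :
    signedLaplacian G w (sgnOfOriented T)
        = paramMatrix G w P O α - Amat w O T
          - ∑ p ∈ O, w p.1 p.2 • Bmat p.1 p.2 (α p) ∧
    (∀ u : V → ℝ,
      dotProduct u ((Amat w O T + ∑ p ∈ O, w p.1 p.2 • Bmat p.1 p.2 (α p)).mulVec u)
        = (∑ p ∈ O \ T, w p.1 p.2 * α p * (u p.1 + u p.2 / α p) ^ 2)
          + ∑ p ∈ T, w p.1 p.2 * α p * (u p.1 - u p.2 / α p) ^ 2) ∧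
    (Amat w O T + ∑ p ∈ O, w p.1 p.2 • Bmat p.1 p.2 (α p)).PosSemidef := by
  -- basic facts
  have hne : ∀ p ∈ O, p.1 ≠ p.2 := fun p hp => (hO p hp).1.ne
  have hkey : ∀ x y : V, ¬((x, y) ∈ O \ T ∧ (y, x) ∈ O \ T) := by
    rintro x y ⟨h1, h2⟩
    have h1O := (Finset.mem_sdiff.mp h1).1
    have h2O := (Finset.mem_sdiff.mp h2).1
    have hadj : G.Adj x y := (hO _ h1O).1
    have hP : P x ≠ P y := (hO _ h1O).2
    exact ((hOorient x y hadj hP).mp h1O) h2O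
  set S : Matrix V V ℝ := ∑ p ∈ O, w p.1 p.2 • Bmat p.1 p.2 (α p) with hS
  -- the Laplacian identity
  have hLap : signedLaplacian G w (sgnOfOriented T)
      = signedLaplacian G w (partSgn P) - Amat w O T := by
    ext i j
    rw [Matrix.sub_apply]
    by_cases hij : i = j
    · subst hij
      have h1 : (i, i) ∉ O \ T := fun h => (hO _ (Finset.mem_sdiff.mp h).1).1.ne rfl
      simp only [signedLaplacian, of_apply, if_pos rfl, Amat,
        if_neg (not_or.mpr ⟨h1, h1⟩)]
      simp
    · by_cases hadj : G.Adj i j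
      · by_cases hPij : P i = P j
        · have hiO : (i, j) ∉ O := fun h => (hO _ h).2 hPij
          have hjO : (j, i) ∉ O := fun h => (hO _ h).2 hPij.symm
          have hiT : (i, j) ∉ T := fun h => hiO (hT h)
          have hjT : (j, i) ∉ T := fun h => hjO (hT h)
          have hA : (i, j) ∉ O \ T := fun h => hiO (Finset.mem_sdiff.mp h).1
          have hA' : (j, i) ∉ O \ T := fun h => hjO (Finset.mem_sdiff.mp h).1
          simp only [signedLaplacian, of_apply, sgnOfOriented, partSgn, Amat,
            if_neg hij, if_pos hadj, if_pos hPij, if_neg (not_or.mpr ⟨hiT, hjT⟩),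
            if_neg (not_or.mpr ⟨hA, hA'⟩)]
          ring
        · by_cases hmem : (i, j) ∈ O
          · have hrev : (j, i) ∉ O := (hOorient i j hadj hPij).mp hmem
            have hjT : (j, i) ∉ T := fun h => hrev (hT h)
            have hA' : (j, i) ∉ O \ T := fun h => hrev (Finset.mem_sdiff.mp h).1
            by_cases hTm : (i, j) ∈ T
            · have hA : (i, j) ∉ O \ T := fun h => (Finset.mem_sdiff.mp h).2 hTm
              simp only [signedLaplacian, of_apply, sgnOfOriented, partSgn, Amat,
                if_neg hij, if_pos hadj, if_neg hPij, if_pos (Or.inl hTm : (i, j) ∈ T ∨ (j, i) ∈ T),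
                if_neg (not_or.mpr ⟨hA, hA'⟩)]
              ring
            · have hA : (i, j) ∈ O \ T := Finset.mem_sdiff.mpr ⟨hmem, hTm⟩
              simp only [signedLaplacian, of_apply, sgnOfOriented, partSgn, Amat,
                if_neg hij, if_pos hadj, if_neg hPij, if_neg (not_or.mpr ⟨hTm, hjT⟩),
                if_pos (Or.inl hA : (i, j) ∈ O \ T ∨ (j, i) ∈ O \ T)]
              ring
          · have hrev : (j, i) ∈ O := by
              by_contra h
              exact hmem ((hOorient i j hadj hPij).mpr h)
            have hiT : (i, j) ∉ T := fun h => hmem (hT h)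
            have hA : (i, j) ∉ O \ T := fun h => hmem (Finset.mem_sdiff.mp h).1
            by_cases hTm : (j, i) ∈ T
            · have hA' : (j, i) ∉ O \ T := fun h => (Finset.mem_sdiff.mp h).2 hTm
              simp only [signedLaplacian, of_apply, sgnOfOriented, partSgn, Amat,
                if_neg hij, if_pos hadj, if_neg hPij, if_pos (Or.inr hTm : (i, j) ∈ T ∨ (j, i) ∈ T),
                if_neg (not_or.mpr ⟨hA, hA'⟩)]
              ring
            · have hA' : (j, i) ∈ O \ T := Finset.mem_sdiff.mpr ⟨hrev, hTm⟩
              simp only [signedLaplacian, of_apply, sgnOfOriented, partSgn, Amat,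
                if_neg hij, if_pos hadj, if_neg hPij, if_neg (not_or.mpr ⟨hiT, hTm⟩),
                if_pos (Or.inr hA' : (i, j) ∈ O \ T ∨ (j, i) ∈ O \ T)]
              ring
      · have hiO : (i, j) ∉ O := fun h => hadj (hO _ h).1
        have hjO : (j, i) ∉ O := fun h => hadj ((hO _ h).1).symm
        have hA : (i, j) ∉ O \ T := fun h => hiO (Finset.mem_sdiff.mp h).1
        have hA' : (j, i) ∉ O \ T := fun h => hjO (Finset.mem_sdiff.mp h).1
        simp only [signedLaplacian, of_apply, Amat, if_neg hij, if_neg hadj,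
          if_neg (not_or.mpr ⟨hA, hA'⟩)]
        ring
  -- the quadratic form identity
  have hquad : ∀ u : V → ℝ,
      dotProduct u ((Amat w O T + S).mulVec u)
        = (∑ p ∈ O \ T, w p.1 p.2 * α p * (u p.1 + u p.2 / α p) ^ 2)
          + ∑ p ∈ T, w p.1 p.2 * α p * (u p.1 - u p.2 / α p) ^ 2 := by
    intro u
    have hAq : u ⬝ᵥ (Amat w O T).mulVec u
        = ∑ p ∈ O \ T, 2 * w p.1 p.2 * (u p.1 * u p.2 + u p.2 * u p.1) := by
      rw [quad_aux_Amat_decomp w hwsymm O T hkey, quad_aux_sum_mulVec, quad_aux_dot_sum]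
      refine Finset.sum_congr rfl fun p hp => ?_
      rw [smul_mulVec, dotProduct_smul, add_mulVec, dotProduct_add, quad_aux_std,
        quad_aux_std]
      simp [mul_add]
    have hSq : u ⬝ᵥ S.mulVec u
        = ∑ p ∈ O, w p.1 p.2 * (α p * (u p.1 - u p.2 / α p) ^ 2) := by
      rw [hS, quad_aux_sum_mulVec, quad_aux_dot_sum]
      refine Finset.sum_congr rfl fun p hp => ?_
      rw [smul_mulVec, dotProduct_smul,
        quad_aux_quadB p.1 p.2 (hne p hp) (α p) (hαpos p hp).ne' u]
      simp
    rw [add_mulVec, dotProduct_add, hAq, hSq, ← Finset.sum_sdiff hT (f := fun p =>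
      w p.1 p.2 * (α p * (u p.1 - u p.2 / α p) ^ 2)), ← add_assoc]
    congr 1
    · rw [← Finset.sum_add_distrib]
      refine Finset.sum_congr rfl fun p hp => ?_
      have hα : α p ≠ 0 := (hαpos p (Finset.mem_sdiff.mp hp).1).ne'
      field_simp
      ring
    · refine Finset.sum_congr rfl fun p hp => ?_
      ring
  refine ⟨?_, hquad, ?_, ?_⟩
  · rw [hLap, paramMatrix, ← hS]
    abel
  · -- Hermitian
    apply Matrix.IsHermitian.ext
    intro x y
    rw [star_trivial]
    show (Amat w O T + S) y x = (Amat w O T + S) x y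
    simp only [Matrix.add_apply, hS, Matrix.sum_apply, Matrix.smul_apply]
    congr 1
    · simp [Amat, Or.comm, hwsymm y x]
    · exact Finset.sum_congr rfl fun p _ => by rw [quad_aux_Bmat_symm]
  · -- nonnegativity
    intro x'
    suffices h : 0 ≤ star (⇑x') ⬝ᵥ ((Amat w O T + S) *ᵥ ⇑x') by
      simpa [dotProduct, mulVec, Finsupp.sum_fintype, Finset.mul_sum, mul_assoc] using h
    rw [star_trivial, hquad x']
    refine add_nonneg (Finset.sum_nonneg fun p hp => ?_) (Finset.sum_nonneg fun p hp => ?_)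
    · have hpO := (Finset.mem_sdiff.mp hp).1
      exact mul_nonneg (mul_nonneg (hwpos _ _ (hO p hpO).1).le (hαpos p hpO).le)
        (sq_nonneg _)
    · have hpO := hT hp
      exact mul_nonneg (mul_nonneg (hwpos _ _ (hO p hpO).1).le (hαpos p hpO).le)
        (sq_nonneg _)


end
end
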